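/- arXiv:2210.11812 — 3 statements merged into one kernel-verified Lean document; each statement's English description precedes it below -/
import Mathlib

section
/- Let b ≥ 4, γ ∈ (2,3) and T > 0. There exists a constant C > 0, depending only on b and γ, such that for every càdlàg (right-continuous with left limits) function F : [0,T] → ℝ, every a > 0 and every δ > 0 one has sup_{0≤σ,τ≤T, |τ−σ|≤δ} |F(τ) − F(σ)| ≤ 2 sup_{0≤σ,τ≤T, |τ−σ|≤2a} |F(τ) − F(σ)| + C · B_a(F)^{1/b} · δ^{(γ−2)/b}. -/
open MeasureTheory Real Filter Topology Set

noncomputable section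

/-- `B_a(F) = ∫_0^T ∫_0^T |F(τ) - F(σ)|^b / |τ - σ|^γ 1_{|τ-σ| > a} dσ dτ`. -/
def Ba (T b γ a : ℝ) (F : ℝ → ℝ) : ℝ :=
  ∫ τ in Set.Icc (0 : ℝ) T, ∫ σ in Set.Icc (0 : ℝ) T,
    (if a < |τ - σ| then |F τ - F σ| ^ b / |τ - σ| ^ γ else 0)


lemma cadlag_bounded {T : ℝ} {F : ℝ → ℝ}
    (hr : ∀ t ∈ Set.Ico (0 : ℝ) T, ContinuousWithinAt F (Set.Ici t) t)
    (hl : ∀ t ∈ Set.Ioc (0 : ℝ) T, ∃ l : ℝ, Tendsto F (𝓝[<] t) (𝓝 l)) :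
    ∃ C₀ : ℝ, 0 ≤ C₀ ∧ ∀ t ∈ Set.Icc (0 : ℝ) T, |F t| ≤ C₀ := by
  have key : ∀ t : ℝ, ∃ εc : ℝ × ℝ, 0 < εc.1 ∧
      (t ∈ Set.Icc (0:ℝ) T → ∀ s ∈ Set.Icc (0:ℝ) T, |s - t| < εc.1 → |F s| ≤ εc.2) := by
    intro t
    by_cases ht : t ∈ Set.Icc (0:ℝ) T
    · -- right side
      have hright : ∃ ε₁ > 0, ∀ s ∈ Set.Icc (0:ℝ) T, t ≤ s → |s - t| < ε₁ → |F s| ≤ |F t| + 1 := by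
        rcases eq_or_lt_of_le ht.2 with hT | hT
        · refine ⟨1, one_pos, fun s hs hts _ => ?_⟩
          have : s = t := le_antisymm (hT ▸ hs.2) hts
          rw [this]
          linarith [abs_nonneg (F t)]
        · have hco := hr t ⟨ht.1, hT⟩
          have h1 : ∀ᶠ s in 𝓝[Set.Ici t] t, |F s - F t| < 1 := by
            have := hco (Metric.ball_mem_nhds (F t) one_pos)
            filter_upwards [this] with s hs
            simpa [Real.dist_eq] using hs
          rw [eventually_nhdsWithin_iff] at h1
          rw [Metric.eventually_nhds_iff] at h1
          obtain ⟨ε, hε, hball⟩ := h1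
          refine ⟨ε, hε, fun s _ hts hst => ?_⟩
          have := hball (show dist s t < ε by rwa [Real.dist_eq]) hts
          have h2 := abs_sub_abs_le_abs_sub (F s) (F t)
          linarith
      -- left side
      have hleft : ∃ ε₂ > 0, ∃ c₂ : ℝ, ∀ s ∈ Set.Icc (0:ℝ) T, s < t → |s - t| < ε₂ → |F s| ≤ c₂ := by
        rcases eq_or_lt_of_le ht.1 with h0 | h0
        · exact ⟨1, one_pos, 0, fun s hs hst _ => absurd (lt_of_le_of_lt hs.1 (h0 ▸ hst)) (lt_irrefl _)⟩
        · obtain ⟨l, hltend⟩ := hl t ⟨h0, ht.2⟩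
          have h1 : ∀ᶠ s in 𝓝[<] t, |F s - l| < 1 := by
            have := hltend (Metric.ball_mem_nhds l one_pos)
            filter_upwards [this] with s hs
            simpa [Real.dist_eq] using hs
          rw [eventually_nhdsWithin_iff] at h1
          rw [Metric.eventually_nhds_iff] at h1
          obtain ⟨ε, hε, hball⟩ := h1
          refine ⟨ε, hε, |l| + 1, fun s _ hst hd => ?_⟩
          have := hball (show dist s t < ε by rwa [Real.dist_eq]) hst
          have h2 := abs_sub_abs_le_abs_sub (F s) l
          linarith
      obtain ⟨ε₁, hε₁, hc₁⟩ := hright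
      obtain ⟨ε₂, hε₂, c₂, hc₂⟩ := hleft
      refine ⟨(min ε₁ ε₂, max (|F t| + 1) c₂), lt_min hε₁ hε₂, fun _ s hs hd => ?_⟩
      rcases le_or_gt t s with h | h
      · exact le_trans (hc₁ s hs h (lt_of_lt_of_le hd (min_le_left _ _))) (le_max_left _ _)
      · exact le_trans (hc₂ s hs h (lt_of_lt_of_le hd (min_le_right _ _))) (le_max_right _ _)
    · exact ⟨(1, 0), one_pos, fun h => absurd h ht⟩
  choose εc hεc hb using key
  obtain ⟨fs, hfs, hcover⟩ := isCompact_Icc.elim_nhds_subcover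
    (fun t => Metric.ball t ((εc t).1))
    (fun t _ => Metric.ball_mem_nhds t (hεc t))
  refine ⟨∑ x ∈ fs, |(εc x).2|, Finset.sum_nonneg fun x _ => abs_nonneg _, fun t htI => ?_⟩
  obtain ⟨x, hx, hxball⟩ := Set.mem_iUnion₂.mp (hcover htI)
  have h1 : |F t| ≤ (εc x).2 := by
    apply hb x (hfs x hx) t htI
    simpa [Real.dist_eq] using hxball
  calc |F t| ≤ (εc x).2 := h1
    _ ≤ |(εc x).2| := le_abs_self _
    _ ≤ ∑ y ∈ fs, |(εc y).2| := Finset.single_le_sum (f := fun y => |(εc y).2|) (fun i _ => abs_nonneg _) hx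


lemma cadlag_measurable {T : ℝ} (hT : 0 < T) {F : ℝ → ℝ}
    (hr : ∀ t ∈ Set.Ico (0 : ℝ) T, ContinuousWithinAt F (Set.Ici t) t) :
    ∃ φ : ℝ → ℝ, Measurable φ ∧ ∀ t ∈ Set.Icc (0 : ℝ) T, φ t = F t := by
  set φ : ℝ → ℝ := fun t => if T ≤ t then F T else F (max t 0) with hφ
  set f : ℕ → ℝ → ℝ := fun n t =>
    if T ≤ t then F T else F (min T ((⌊(max t 0) * 2 ^ n⌋ + 1 : ℤ) / 2 ^ n)) with hf
  have hmeas : ∀ n, Measurable (f n) := by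
    intro n
    apply Measurable.ite measurableSet_Ici measurable_const
    have h1 : Measurable fun t : ℝ => (⌊(max t 0) * 2 ^ n⌋ : ℤ) :=
      Int.measurable_floor.comp ((measurable_id.max measurable_const).mul measurable_const)
    exact (measurable_of_countable (fun k : ℤ => F (min T ((k + 1 : ℤ) / 2 ^ n)))).comp h1
  have htend : ∀ t, Tendsto (fun n => f n t) atTop (𝓝 (φ t)) := by
    intro t
    by_cases ht : T ≤ t
    · simp only [hf, hφ, if_pos ht]; exact tendsto_const_nhds
    · push_neg at ht
      simp only [hf, hφ, if_neg (not_le.mpr ht)]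
      set s := max t 0 with hs
      have hs0 : 0 ≤ s := le_max_right _ _
      have hsT : s < T := max_lt ht hT
      set u : ℕ → ℝ := fun n => min T ((⌊s * 2 ^ n⌋ + 1 : ℤ) / 2 ^ n) with hu
      have h2n : ∀ n : ℕ, (0:ℝ) < 2 ^ n := fun n => by positivity
      have hgt : ∀ n, s < u n := by
        intro n
        refine lt_min hsT ?_
        rw [lt_div_iff₀ (h2n n)]
        push_cast
        exact Int.lt_floor_add_one _
      have hle : ∀ n, u n ≤ s + (1/2) ^ n := by
        intro n
        refine le_trans (min_le_right _ _) ?_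
        rw [div_le_iff₀ (h2n n)]
        push_cast
        have := Int.floor_le (s * 2 ^ n)
        have h2 : ((1:ℝ)/2) ^ n * 2 ^ n = 1 := by
          rw [← mul_pow]; norm_num
        nlinarith [h2n n]
      have hulim : Tendsto u atTop (𝓝 s) := by
        have h1 : Tendsto (fun n : ℕ => s + (1/2 : ℝ) ^ n) atTop (𝓝 s) := by
          have := tendsto_pow_atTop_nhds_zero_of_lt_one (by norm_num : (0:ℝ) ≤ 1/2) (by norm_num)
          simpa using tendsto_const_nhds.add this
        exact tendsto_of_tendsto_of_tendsto_of_le_of_le tendsto_const_nhds h1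
          (fun n => (hgt n).le) hle
      have hulim' : Tendsto u atTop (𝓝[Set.Ici s] s) :=
        tendsto_nhdsWithin_of_tendsto_nhds_of_eventually_within _ hulim
          (Eventually.of_forall fun n => (hgt n).le)
      exact (hr s ⟨hs0, hsT⟩).tendsto.comp hulim'
  refine ⟨φ, measurable_of_tendsto_metrizable hmeas
    (tendsto_pi_nhds.mpr htend), fun t ht => ?_⟩
  rcases eq_or_lt_of_le ht.2 with h | h
  · simp [hφ, h]
  · simp [hφ, not_le.mpr h, max_eq_left ht.1]


lemma exists_good_point {T ℓ : ℝ} (S : Set ℝ) (hS : MeasurableSet S)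
    (hsub : S ⊆ Set.Icc (0:ℝ) T) (hℓ : 0 < ℓ) (hvol : volume S = ENNReal.ofReal ℓ)
    (f₁ f₂ : ℝ → ℝ) (hm₁ : Measurable f₁) (hm₂ : Measurable f₂)
    (h0₁ : ∀ x, 0 ≤ f₁ x) (h0₂ : ∀ x, 0 ≤ f₂ x)
    (hi₁ : IntegrableOn f₁ (Set.Icc (0:ℝ) T)) (hi₂ : IntegrableOn f₂ (Set.Icc (0:ℝ) T))
    {A₁ A₂ : ℝ} (hA₁ : ∫ x in Set.Icc (0:ℝ) T, f₁ x ≤ A₁)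
    (hA₂ : ∫ x in Set.Icc (0:ℝ) T, f₂ x ≤ A₂) :
    ∃ u ∈ S, f₁ u ≤ 4 * A₁ / ℓ ∧ f₂ u ≤ 4 * A₂ / ℓ := by
  have hIccfin : volume (Set.Icc (0:ℝ) T) < ⊤ := by
    rw [Real.volume_Icc]; exact ENNReal.ofReal_lt_top
  have main : ∀ f : ℝ → ℝ, Measurable f → (∀ x, 0 ≤ f x) →
      IntegrableOn f (Set.Icc (0:ℝ) T) → ∀ A : ℝ, (∫ x in Set.Icc (0:ℝ) T, f x) ≤ A →
      volume (S ∩ {x | 4 * A / ℓ < f x}) ≤ ENNReal.ofReal (ℓ / 4) := by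
    intro f hm h0 hi A hA
    set E := S ∩ {x | 4 * A / ℓ < f x} with hE
    have hEmeas : MeasurableSet E := hS.inter (measurableSet_lt measurable_const hm)
    have hEsub : E ⊆ Set.Icc (0:ℝ) T := fun x hx => hsub hx.1
    have hEfin : volume E ≠ ⊤ := ((measure_mono hEsub).trans_lt hIccfin).ne
    have hA0 : 0 ≤ A := le_trans (setIntegral_nonneg measurableSet_Icc fun x _ => h0 x) hA
    rcases eq_or_lt_of_le hA0 with hA0' | hA0'
    · -- A = 0 : f vanishes a.e. on Icc
      have hint0 : (∫ x in Set.Icc (0:ℝ) T, f x) = 0 :=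
        le_antisymm (hA0' ▸ hA) (setIntegral_nonneg measurableSet_Icc fun x _ => h0 x)
      have hae : f =ᵐ[volume.restrict (Set.Icc (0:ℝ) T)] 0 :=
        (integral_eq_zero_iff_of_nonneg h0 hi).mp hint0
      have hnull : volume.restrict (Set.Icc (0:ℝ) T) {x | f x ≠ 0} = 0 := by
        have := hae
        rw [EventuallyEq, ae_iff] at this
        simpa using this
      have hEsub' : E ⊆ {x | f x ≠ 0} := by
        intro x hx
        have : 4 * A / ℓ < f x := hx.2
        rw [← hA0'] at this
        simp only [Set.mem_setOf_eq]
        intro h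
        rw [h] at this
        simp at this
      have : volume E = 0 := by
        have h1 : volume E = volume.restrict (Set.Icc (0:ℝ) T) E := by
          rw [Measure.restrict_apply hEmeas]
          congr 1
          exact (Set.inter_eq_left.mpr hEsub).symm
        rw [h1]
        exact le_antisymm (le_trans (measure_mono hEsub') hnull.le) zero_le
      rw [this]; exact zero_le
    · -- A > 0
      set c := 4 * A / ℓ with hc
      have hcpos : 0 < c := by positivity
      have h1 : c * (volume E).toReal ≤ ∫ x in E, f x :=
        setIntegral_ge_of_const_le_real hEmeas hEfin (fun x hx => le_of_lt hx.2) (hi.mono_set hEsub)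
      have h2 : (∫ x in E, f x) ≤ ∫ x in Set.Icc (0:ℝ) T, f x :=
        setIntegral_mono_set hi (Eventually.of_forall h0) (HasSubset.Subset.eventuallyLE hEsub)
      have h3 : (volume E).toReal ≤ ℓ / 4 := by
        have := le_trans h1 (le_trans h2 hA)
        rw [hc] at this
        rw [div_mul_eq_mul_div, div_le_iff₀ hℓ] at this
        rw [le_div_iff₀ (by norm_num : (0:ℝ) < 4)]
        nlinarith [ENNReal.toReal_nonneg (a := volume E)]
      calc volume E = ENNReal.ofReal (volume E).toReal := (ENNReal.ofReal_toReal hEfin).symm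
        _ ≤ ENNReal.ofReal (ℓ / 4) := ENNReal.ofReal_le_ofReal h3
  have h₁ := main f₁ hm₁ h0₁ hi₁ A₁ hA₁
  have h₂ := main f₂ hm₂ h0₂ hi₂ A₂ hA₂
  by_contra hcon
  push_neg at hcon
  have hsub2 : S ⊆ (S ∩ {x | 4 * A₁ / ℓ < f₁ x}) ∪ (S ∩ {x | 4 * A₂ / ℓ < f₂ x}) := by
    intro u hu
    rcases le_or_gt (f₁ u) (4 * A₁ / ℓ) with h | h
    · exact Or.inr ⟨hu, lt_of_not_ge fun hh => absurd hh (fun hh2 => by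
        exact absurd (hcon u hu h) (not_lt.mpr hh2).elim) ⟩
    · exact Or.inl ⟨hu, h⟩
  have : ENNReal.ofReal ℓ ≤ ENNReal.ofReal (ℓ / 2) := by
    calc ENNReal.ofReal ℓ = volume S := hvol.symm
      _ ≤ _ := measure_mono hsub2
      _ ≤ _ := measure_union_le _ _
      _ ≤ ENNReal.ofReal (ℓ/4) + ENNReal.ofReal (ℓ/4) := add_le_add h₁ h₂
      _ = ENNReal.ofReal (ℓ/2) := by
          rw [← ENNReal.ofReal_add (by positivity) (by positivity)]; ring_nf
  rw [ENNReal.ofReal_le_ofReal_iff (by positivity)] at this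
  linarith

set_option maxHeartbeats 2000000 in
/-- modified Garsia–Rodemich–Rumsey inequality: for `b ≥ 4` and
`γ ∈ (2,3)` there is a constant `C > 0` depending only on `b, γ` such that for any
`T > 0`, any càdlàg `F : [0,T] → ℝ`, any `a > 0` and `δ > 0`,
`sup_{|τ-σ| ≤ δ} |F(τ) - F(σ)| ≤ 2 sup_{|τ-σ| ≤ 2a} |F(τ) - F(σ)| + C B_a(F)^{1/b} δ^{(γ-2)/b}`.
(The supremum over `|τ-σ| ≤ 2a` is represented by an arbitrary upper bound `M`.) -/
theorem modified_GRR (b γ : ℝ) (hb : 4 ≤ b) (hγ : γ ∈ Set.Ioo (2 : ℝ) 3) :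
    ∃ C > (0 : ℝ), ∀ T > (0 : ℝ), ∀ F : ℝ → ℝ,
      (∀ t ∈ Set.Ico (0 : ℝ) T, ContinuousWithinAt F (Set.Ici t) t) →
      (∀ t ∈ Set.Ioc (0 : ℝ) T, ∃ l : ℝ, Tendsto F (𝓝[<] t) (𝓝 l)) →
      ∀ a > (0 : ℝ), ∀ δ > (0 : ℝ), ∀ M : ℝ,
        (∀ σ ∈ Set.Icc (0 : ℝ) T, ∀ τ ∈ Set.Icc (0 : ℝ) T,
          |τ - σ| ≤ 2 * a → |F τ - F σ| ≤ M) →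
        ∀ σ ∈ Set.Icc (0 : ℝ) T, ∀ τ ∈ Set.Icc (0 : ℝ) T, |τ - σ| ≤ δ →
          |F τ - F σ| ≤ 2 * M + C * (Ba T b γ a F) ^ (1 / b) * δ ^ ((γ - 2) / b) := by
  obtain ⟨hγ2, hγ3⟩ := hγ
  have hb0 : (0:ℝ) < b := by linarith
  set e : ℝ := (γ - 2) / b with he
  have he0 : 0 < e := by apply div_pos <;> linarith
  set q : ℝ := (4:ℝ) ^ (-e) with hq
  have hq0 : 0 < q := rpow_pos_of_pos (by norm_num) _
  have hq1 : q < 1 := rpow_lt_one_of_one_lt_of_neg (by norm_num) (by linarith)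
  set C : ℝ := 12 * (1 + 2 / (1 - q)) with hC
  have hCpos : 0 < C := by
    have h1 : 0 < 1 - q := by linarith
    have : 0 < 2 / (1 - q) := by positivity
    nlinarith
  refine ⟨C, hCpos, ?_⟩
  intro T hT F hr hl a ha δ hδ M hM
  obtain ⟨C₀, hC₀0, hC₀⟩ := cadlag_bounded hr hl
  obtain ⟨φ₀, hφ₀m, hφ₀e⟩ := cadlag_measurable hT hr
  set φ : ℝ → ℝ := fun u => max (-C₀) (min C₀ (φ₀ u)) with hφdef
  have hφm : Measurable φ := measurable_const.max (measurable_const.min hφ₀m)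
  have hφe : ∀ t ∈ Set.Icc (0:ℝ) T, φ t = F t := by
    intro t ht
    have h1 := hC₀ t ht
    rw [abs_le] at h1
    simp only [hφdef, hφ₀e t ht]
    rw [min_eq_right h1.2, max_eq_right h1.1]
  have hφb : ∀ u, |φ u| ≤ C₀ := by
    intro u
    rw [abs_le]
    constructor
    · simp [hφdef]
    · simp only [hφdef, max_le_iff]
      exact ⟨by linarith, le_trans (min_le_left _ _) le_rfl⟩
  -- the kernel
  set g : ℝ → ℝ → ℝ := fun u v =>
    if a < |u - v| then |φ u - φ v| ^ b / |u - v| ^ γ else 0 with hgdef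
  have hg0 : ∀ u v, 0 ≤ g u v := by
    intro u v
    simp only [hgdef]
    split
    · apply div_nonneg (rpow_nonneg (abs_nonneg _) _) (rpow_nonneg (abs_nonneg _) _)
    · exact le_refl 0
  have hgsymm : ∀ u v, g u v = g v u := by
    intro u v
    simp only [hgdef, abs_sub_comm u v, abs_sub_comm (φ u) (φ v)]
  set Kg : ℝ := (2 * C₀) ^ b / a ^ γ with hKgdef
  have hKg0 : 0 ≤ Kg := div_nonneg (rpow_nonneg (by linarith) _) (rpow_nonneg ha.le _)
  have hKg : ∀ u v, g u v ≤ Kg := by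
    intro u v
    simp only [hgdef]
    split
    · rename_i h
      apply div_le_div₀ (rpow_nonneg (by linarith) _)
      · apply rpow_le_rpow (abs_nonneg _) _ hb0.le
        calc |φ u - φ v| ≤ |φ u| + |φ v| := abs_sub _ _
          _ ≤ 2 * C₀ := by linarith [hφb u, hφb v]
      · exact rpow_pos_of_pos ha _
      · exact rpow_le_rpow ha.le h.le (by linarith)
    · exact hKg0
  have hgmeas2 : Measurable (fun p : ℝ × ℝ => g p.1 p.2) := by
    apply Measurable.ite
    · exact measurableSet_lt measurable_const ((measurable_fst.sub measurable_snd).abs)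
    · apply Measurable.div
      · exact (continuous_rpow_const hb0.le).measurable.comp
          (((hφm.comp measurable_fst).sub (hφm.comp measurable_snd)).abs)
      · exact (continuous_rpow_const (by linarith : (0:ℝ) ≤ γ)).measurable.comp
          ((measurable_fst.sub measurable_snd).abs)
    · exact measurable_const
  have hgmeas : ∀ u, Measurable (g u) := by
    intro u
    exact hgmeas2.comp (measurable_const.prodMk measurable_id)
  set G : ℝ → ℝ := fun u => ∫ v in Set.Icc (0:ℝ) T, g u v with hGdef
  have hGmeas : Measurable G :=
    (hgmeas2.stronglyMeasurable.integral_prod_right').measurable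
  have hG0 : ∀ u, 0 ≤ G u := fun u =>
    setIntegral_nonneg measurableSet_Icc (fun x _ => hg0 u x)
  have hIccfin : volume (Set.Icc (0:ℝ) T) < ⊤ := by
    rw [Real.volume_Icc]; exact ENNReal.ofReal_lt_top
  have hgint : ∀ u, IntegrableOn (g u) (Set.Icc (0:ℝ) T) := by
    intro u
    apply Integrable.mono' (g := fun _ => Kg)
    · exact integrableOn_const hIccfin.ne
    · exact (hgmeas u).aestronglyMeasurable
    · exact Eventually.of_forall fun x => by
        rw [Real.norm_eq_abs, abs_of_nonneg (hg0 u x)]; exact hKg u x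
  have hGbound : ∀ u, G u ≤ Kg * T := by
    intro u
    calc G u ≤ ∫ _ in Set.Icc (0:ℝ) T, Kg := by
          apply setIntegral_mono (hgint u) (integrableOn_const hIccfin.ne)
          exact fun x => hKg u x
      _ = Kg * T := by
          rw [setIntegral_const, smul_eq_mul, Real.volume_real_Icc_of_le (by linarith)]
          ring
  have hGint : IntegrableOn G (Set.Icc (0:ℝ) T) := by
    apply Integrable.mono' (g := fun _ => Kg * T)
    · exact integrableOn_const hIccfin.ne
    · exact hGmeas.aestronglyMeasurable
    · exact Eventually.of_forall fun x => by
        rw [Real.norm_eq_abs, abs_of_nonneg (hG0 x)]; exact hGbound x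
  set B : ℝ := Ba T b γ a F with hBdef
  have hBa : B = ∫ x in Set.Icc (0:ℝ) T, G x := by
    rw [hBdef, Ba]
    apply setIntegral_congr_fun measurableSet_Icc
    intro τ hτ
    apply setIntegral_congr_fun measurableSet_Icc
    intro σ hσ
    simp only [hgdef, hφe τ hτ, hφe σ hσ]
  have hB0 : 0 ≤ B := by
    rw [hBa]
    exact setIntegral_nonneg measurableSet_Icc fun x _ => hG0 x
  have hGB : ∫ x in Set.Icc (0:ℝ) T, G x ≤ B := le_of_eq hBa.symm
  have hRHS0 : 0 ≤ C * B ^ (1/b) * δ ^ e :=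
    mul_nonneg (mul_nonneg hCpos.le (rpow_nonneg hB0 _)) (rpow_nonneg hδ.le _)
  suffices key : ∀ s t : ℝ, s ∈ Set.Icc (0:ℝ) T → t ∈ Set.Icc (0:ℝ) T → s ≤ t → t - s ≤ δ →
      |F t - F s| ≤ 2 * M + C * B ^ (1/b) * δ ^ e by
    intro σ hσ τ hτ hd
    rcases le_total σ τ with h | h
    · exact key σ τ hσ hτ h (by rwa [abs_of_nonneg (sub_nonneg.mpr h)] at hd)
    · rw [abs_sub_comm]
      exact key τ σ hτ hσ h (by rwa [abs_sub_comm, abs_of_nonneg (sub_nonneg.mpr h)] at hd)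
  intro s t hs ht hst hdδ
  set d : ℝ := t - s with hd
  have hd0 : 0 ≤ d := sub_nonneg.mpr hst
  rcases le_or_gt d (4 * a) with hcase | hcase
  · -- short case : two jumps through the midpoint
    have hm : (s + t) / 2 ∈ Set.Icc (0:ℝ) T := by
      constructor
      · nlinarith [hs.1, ht.1]
      · nlinarith [hs.2, ht.2]
    have h1 : |F t - F ((s+t)/2)| ≤ M := by
      apply hM _ hm _ ht
      rw [abs_of_nonneg (by linarith)]
      linarith
    have h2 : |F ((s+t)/2) - F s| ≤ M := by
      apply hM _ hs _ hm
      rw [abs_of_nonneg (by linarith)]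
      linarith
    calc |F t - F s| = |(F t - F ((s+t)/2)) + (F ((s+t)/2) - F s)| := by ring_nf
      _ ≤ |F t - F ((s+t)/2)| + |F ((s+t)/2) - F s| := abs_add_le _ _
      _ ≤ 2 * M + C * B ^ (1/b) * δ ^ e := by linarith
  · -- chaining case
    have hd0' : 0 < d := by linarith
    set dk : ℕ → ℝ := fun k => d / 4 ^ k with hdk
    have hdk0 : ∀ k, 0 < dk k := fun k => div_pos hd0' (by positivity)
    have hdksucc : ∀ k, dk (k + 1) = dk k / 4 := by
      intro k
      simp only [hdk, pow_succ]
      field_simp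
    have hdkanti : ∀ j k : ℕ, j ≤ k → dk k ≤ dk j := by
      intro j k hjk
      apply div_le_div_of_nonneg_left hd0'.le (by positivity)
      exact pow_le_pow_right₀ (by norm_num) hjk
    -- stopping index
    have hex : ∃ n : ℕ, d / 4 ^ (n + 1) ≤ 3 / 2 * a := by
      obtain ⟨n, hn⟩ := pow_unbounded_of_one_lt (d / (3 / 2 * a)) (by norm_num : (1:ℝ) < 4)
      refine ⟨n, ?_⟩
      rw [div_lt_iff₀ (by positivity)] at hn
      rw [div_le_iff₀ (by positivity)]
      calc d ≤ 3 / 2 * a * 4 ^ n := by nlinarith [hn]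
        _ ≤ 3 / 2 * a * 4 ^ (n + 1) := by
            have : (4:ℝ) ^ n ≤ 4 ^ (n+1) := pow_le_pow_right₀ (by norm_num) (Nat.le_succ n)
            nlinarith
      done
    set N : ℕ := Nat.find hex + 1 with hN
    have hN1 : 1 ≤ N := Nat.le_add_left 1 _
    have hNle : dk N ≤ 3 / 2 * a := Nat.find_spec hex
    have hNgt : 3 / 8 * a < dk N := by
      rcases Nat.eq_zero_or_pos (Nat.find hex) with h0 | hpos
      · have : dk N = d / 4 := by rw [hN, h0]; simp [hdk]
        rw [this]; linarith
      · have hmin := Nat.find_min hex (Nat.sub_lt hpos one_pos)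
        push_neg at hmin
        have hNsub : Nat.find hex - 1 + 1 = Nat.find hex := Nat.succ_pred_eq_of_pos hpos
        rw [hNsub] at hmin
        have : dk N = dk (Nat.find hex) / 4 := by rw [hN]; exact hdksucc _
        rw [this]
        have : (3:ℝ) / 2 * a < dk (Nat.find hex) := hmin
        linarith
    have hdkN : ∀ k, k ≤ N → dk N ≤ dk k := fun k hk => hdkanti k N hk
    -- intervals
    set I : ℕ → Set ℝ := fun k => Set.Ico (s + dk k) (s + dk k + dk k / 3) with hI
    set J : ℕ → Set ℝ := fun k => Set.Ioc (t - dk k - dk k / 3) (t - dk k) with hJ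
    have hd1 : dk 1 = d / 4 := by simp [hdk]
    have hIsub : ∀ k, 1 ≤ k → I k ⊆ Set.Icc (0:ℝ) T := by
      intro k hk u hu
      have h1 : dk k ≤ d / 4 := hd1 ▸ hdkanti 1 k hk
      have h2 := hdk0 k
      obtain ⟨hu1, hu2⟩ := hu
      constructor
      · linarith [hs.1]
      · have : u < s + dk k + dk k / 3 := hu2
        have : u ≤ t := by linarith
        linarith [ht.2]
    have hJsub : ∀ k, 1 ≤ k → J k ⊆ Set.Icc (0:ℝ) T := by
      intro k hk u hu
      have h1 : dk k ≤ d / 4 := hd1 ▸ hdkanti 1 k hk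
      have h2 := hdk0 k
      obtain ⟨hu1, hu2⟩ := hu
      constructor
      · have : s ≤ u := by linarith
        linarith [hs.1]
      · have : u ≤ t := by linarith
        linarith [ht.2]
    -- pick functions
    have pickI : ∀ (p : ℝ) (k : ℕ), 1 ≤ k → k ≤ N →
        ∃ u, u ∈ I k ∧ G u ≤ 12 * B / dk k ∧ g p u ≤ 12 * G p / dk k := by
      intro p k hk1 hkN
      have hvol : volume (I k) = ENNReal.ofReal (dk k / 3) := by
        rw [hI]
        simp only [Real.volume_Ico]
        congr 1
        ring
      obtain ⟨u, hu, h1, h2⟩ := exists_good_point (I k) measurableSet_Ico (hIsub k hk1)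
        (by positivity) hvol G (g p) hGmeas (hgmeas p) hG0 (hg0 p) hGint (hgint p)
        hGB (le_of_eq rfl)
      refine ⟨u, hu, ?_, ?_⟩
      · calc G u ≤ 4 * B / (dk k / 3) := h1
          _ = 12 * B / dk k := by field_simp; ring
      · calc g p u ≤ 4 * G p / (dk k / 3) := h2
          _ = 12 * G p / dk k := by field_simp; ring
    have pickJ : ∀ (p : ℝ) (k : ℕ), 1 ≤ k → k ≤ N →
        ∃ u, u ∈ J k ∧ G u ≤ 12 * B / dk k ∧ g p u ≤ 12 * G p / dk k := by
      intro p k hk1 hkN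
      have hvol : volume (J k) = ENNReal.ofReal (dk k / 3) := by
        rw [hJ]
        simp only [Real.volume_Ioc]
        congr 1
        ring
      obtain ⟨u, hu, h1, h2⟩ := exists_good_point (J k) measurableSet_Ioc (hJsub k hk1)
        (by positivity) hvol G (g p) hGmeas (hgmeas p) hG0 (hg0 p) hGint (hgint p)
        hGB (le_of_eq rfl)
      refine ⟨u, hu, ?_, ?_⟩
      · calc G u ≤ 4 * B / (dk k / 3) := h1
          _ = 12 * B / dk k := by field_simp; ring
      · calc g p u ≤ 4 * G p / (dk k / 3) := h2
          _ = 12 * G p / dk k := by field_simp; ring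
    choose! nxtI hnxtI1 hnxtI2 hnxtI3 using pickI
    choose! nxtJ hnxtJ1 hnxtJ2 hnxtJ3 using pickJ
    -- the chains
    set x : ℕ → ℝ := fun n => Nat.rec (nxtI 0 1) (fun n xn => nxtI xn (n + 2)) n with hxdef
    set y : ℕ → ℝ := fun n => Nat.rec (nxtJ (x 0) 1) (fun n yn => nxtJ yn (n + 2)) n with hydef
    have hx0 : x 0 = nxtI 0 1 := rfl
    have hxs : ∀ n, x (n + 1) = nxtI (x n) (n + 2) := fun n => rfl
    have hy0 : y 0 = nxtJ (x 0) 1 := rfl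
    have hys : ∀ n, y (n + 1) = nxtJ (y n) (n + 2) := fun n => rfl
    have hxmem : ∀ n, n + 1 ≤ N → x n ∈ I (n + 1) := by
      intro n hn
      cases n with
      | zero => rw [hx0]; exact hnxtI1 0 1 le_rfl hn
      | succ k => rw [hxs]; exact hnxtI1 (x k) (k + 2) (by omega) hn
    have hxG : ∀ n, n + 1 ≤ N → G (x n) ≤ 12 * B / dk (n + 1) := by
      intro n hn
      cases n with
      | zero => rw [hx0]; exact hnxtI2 0 1 le_rfl hn
      | succ k => rw [hxs]; exact hnxtI2 (x k) (k + 2) (by omega) hn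
    have hxg : ∀ n, n + 2 ≤ N → g (x n) (x (n + 1)) ≤ 12 * G (x n) / dk (n + 2) := by
      intro n hn
      rw [hxs]
      exact hnxtI3 (x n) (n + 2) (by omega) hn
    have hymem : ∀ n, n + 1 ≤ N → y n ∈ J (n + 1) := by
      intro n hn
      cases n with
      | zero => rw [hy0]; exact hnxtJ1 (x 0) 1 le_rfl hn
      | succ k => rw [hys]; exact hnxtJ1 (y k) (k + 2) (by omega) hn
    have hyG : ∀ n, n + 1 ≤ N → G (y n) ≤ 12 * B / dk (n + 1) := by
      intro n hn
      cases n with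
      | zero => rw [hy0]; exact hnxtJ2 (x 0) 1 le_rfl hn
      | succ k => rw [hys]; exact hnxtJ2 (y k) (k + 2) (by omega) hn
    have hyg : ∀ n, n + 2 ≤ N → g (y n) (y (n + 1)) ≤ 12 * G (y n) / dk (n + 2) := by
      intro n hn
      rw [hys]
      exact hnxtJ3 (y n) (n + 2) (by omega) hn
    have hcross : g (x 0) (y 0) ≤ 12 * G (x 0) / dk 1 := by
      rw [hy0]
      exact hnxtJ3 (x 0) 1 le_rfl hN1
    -- exponent algebra
    have hdq : ∀ k : ℕ, (dk k ^ (γ - 2)) ^ (1 / b) = d ^ e * q ^ k := by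
      intro k
      have h1 : ((4:ℝ) ^ k : ℝ) ^ e = ((4:ℝ) ^ e) ^ k := by
        rw [← Real.rpow_natCast (4:ℝ) k, ← Real.rpow_mul (by norm_num), mul_comm,
          Real.rpow_mul (by norm_num), Real.rpow_natCast]
      have h2 : (γ - 2) * (1 / b) = e := by rw [he]; ring
      rw [← Real.rpow_mul (hdk0 k).le, h2]
      show (d / 4 ^ k) ^ e = d ^ e * q ^ k
      rw [Real.div_rpow hd0'.le (by positivity), h1, hq, Real.rpow_neg (by norm_num), inv_pow,
        div_eq_mul_inv]
    have hone_div_b : (0:ℝ) ≤ 1 / b := by positivity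
    -- the one-step estimate
    have step : ∀ (u v : ℝ) (k : ℕ), a < u - v → u - v ≤ 5 * dk k →
        g v u ≤ 150 * B / dk k ^ 2 → |φ u - φ v| ≤ 12 * B ^ (1 / b) * (d ^ e * q ^ k) := by
      intro u v k h1 h2 h3
      have hdkk := hdk0 k
      have huv0 : 0 < u - v := lt_trans ha h1
      have habs : |v - u| = u - v := by rw [abs_sub_comm]; exact abs_of_pos huv0
      have hcond : a < |v - u| := by rw [habs]; exact h1
      have hgval : g v u = |φ v - φ u| ^ b / |v - u| ^ γ := by
        simp only [hgdef, if_pos hcond]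
      have hpow : |φ u - φ v| ^ b = g v u * (u - v) ^ γ := by
        rw [hgval, habs, abs_sub_comm (φ v) (φ u),
          div_mul_cancel₀ _ (ne_of_gt (rpow_pos_of_pos huv0 γ))]
      have hγpos : (0:ℝ) ≤ γ := by linarith
      have hBound : |φ u - φ v| ^ b ≤ 20736 * (B * dk k ^ (γ - 2)) := by
        have h5 : (u - v) ^ γ ≤ (5 * dk k) ^ γ := rpow_le_rpow huv0.le h2 hγpos
        have h6 : ((5:ℝ) * dk k) ^ γ = 5 ^ γ * dk k ^ γ := Real.mul_rpow (by norm_num) hdkk.le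
        have h7 : (5:ℝ) ^ γ ≤ 125 := by
          calc (5:ℝ) ^ γ ≤ 5 ^ (3:ℝ) := rpow_le_rpow_of_exponent_le (by norm_num) hγ3.le
            _ = 125 := by
              rw [show (3:ℝ) = ((3:ℕ):ℝ) by norm_num, Real.rpow_natCast]; norm_num
        have h8 : dk k ^ γ = dk k ^ (γ - 2) * dk k ^ 2 := by
          rw [← Real.rpow_natCast (dk k) 2, ← Real.rpow_add hdkk]
          norm_num
        have h9 : (0:ℝ) ≤ 150 * B / dk k ^ 2 :=
          div_nonneg (mul_nonneg (by norm_num) hB0) (by positivity)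
        calc |φ u - φ v| ^ b = g v u * (u - v) ^ γ := hpow
          _ ≤ (150 * B / dk k ^ 2) * ((5 * dk k) ^ γ) :=
              mul_le_mul h3 h5 (rpow_nonneg huv0.le _) h9
          _ = (150 * 5 ^ γ) * (B * dk k ^ (γ - 2)) := by
              rw [h6, h8]
              field_simp
          _ ≤ 20736 * (B * dk k ^ (γ - 2)) := by
              apply mul_le_mul_of_nonneg_right (by linarith [h7])
                (mul_nonneg hB0 (rpow_nonneg hdkk.le _))
      have hfinal : |φ u - φ v| ≤ (20736 * (B * dk k ^ (γ - 2))) ^ (1 / b) := by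
        have h10 := rpow_le_rpow (rpow_nonneg (abs_nonneg (φ u - φ v)) b) hBound hone_div_b
        rwa [← Real.rpow_mul (abs_nonneg _), mul_one_div, div_self hb0.ne', Real.rpow_one] at h10
      have h12 : (20736:ℝ) ^ (1 / b) ≤ 12 := by
        calc (20736:ℝ) ^ (1/b) ≤ 20736 ^ (1/4 : ℝ) := by
              apply rpow_le_rpow_of_exponent_le (by norm_num)
              exact one_div_le_one_div_of_le (by norm_num) hb
          _ = 12 := by
              rw [show (20736:ℝ) = 12 ^ ((4:ℕ):ℝ) by
                    rw [Real.rpow_natCast]; norm_num,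
                ← Real.rpow_mul (by norm_num)]
              norm_num
      calc |φ u - φ v| ≤ (20736 * (B * dk k ^ (γ - 2))) ^ (1/b) := hfinal
        _ = 20736 ^ (1/b) * (B ^ (1/b) * (dk k ^ (γ-2)) ^ (1/b)) := by
            rw [Real.mul_rpow (by norm_num) (mul_nonneg hB0 (rpow_nonneg (hdk0 k).le _)),
              Real.mul_rpow hB0 (rpow_nonneg (hdk0 k).le _)]
        _ = 20736 ^ (1/b) * (B ^ (1/b) * (d ^ e * q ^ k)) := by rw [hdq k]
        _ ≤ 12 * (B ^ (1/b) * (d ^ e * q ^ k)) := by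
            apply mul_le_mul_of_nonneg_right h12
            exact mul_nonneg (rpow_nonneg hB0 _)
              (mul_nonneg (rpow_nonneg hd0 _) (pow_nonneg hq0.le _))
        _ = 12 * B ^ (1/b) * (d ^ e * q ^ k) := by ring
    -- geometric sum bound
    have hq1' : (0:ℝ) < 1 - q := by linarith
    have hgeom : ∀ mm : ℕ, ∑ n ∈ Finset.range mm, q ^ (n + 2) ≤ 1 / (1 - q) := by
      intro mm
      calc ∑ n ∈ Finset.range mm, q ^ (n + 2)
          ≤ ∑ n ∈ Finset.range mm, q ^ n := by
            apply Finset.sum_le_sum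
            intro n _
            exact pow_le_pow_of_le_one hq0.le hq1.le (by omega)
        _ = (q ^ mm - 1) / (q - 1) := geom_sum_eq hq1.ne mm
        _ = (1 - q ^ mm) / (1 - q) := by
            rw [← neg_div_neg_eq]; ring_nf
        _ ≤ 1 / (1 - q) := by
            rw [div_le_div_iff_of_pos_right hq1']
            nlinarith [pow_nonneg hq0.le mm]
    set m : ℕ := N - 1 with hm
    have hmN : m + 1 = N := by omega
    set B' : ℝ := B ^ (1 / b) with hB'
    have hB'0 : 0 ≤ B' := rpow_nonneg hB0 _
    have hde0 : 0 ≤ d ^ e := rpow_nonneg hd0 _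
    -- x-chain estimate
    have hxstep : ∀ n, n + 2 ≤ N → |φ (x n) - φ (x (n + 1))| ≤ 12 * B' * (d ^ e * q ^ (n + 2)) := by
      intro n hn2
      have hn1 : n + 1 ≤ N := by omega
      obtain ⟨hu1, hu2⟩ := hxmem n hn1
      obtain ⟨hv1, hv2⟩ := hxmem (n + 1) hn2
      have hsucc : dk (n + 2) = dk (n + 1) / 4 := hdksucc (n + 1)
      have hdkN2 : dk N ≤ dk (n + 2) := hdkN (n + 2) hn2
      have hdk2pos := hdk0 (n + 2)
      apply step (x n) (x (n + 1)) (n + 2)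
      · -- a < x n - x (n+1)
        have : s + dk (n + 2) ≤ x (n + 1) := hv1
        linarith [hNgt]
      · -- x n - x (n+1) ≤ 5 * dk (n+2)
        linarith
      · -- kernel bound
        rw [← hgsymm]
        calc g (x n) (x (n + 1)) ≤ 12 * G (x n) / dk (n + 2) := hxg n hn2
          _ ≤ 12 * (12 * B / dk (n + 1)) / dk (n + 2) := by
              rw [div_le_div_iff_of_pos_right hdk2pos]
              linarith [hxG n hn1]
          _ = 36 * B / dk (n + 2) ^ 2 := by
              have hne : dk (n + 2) ≠ 0 := hdk2pos.ne'
              rw [show dk (n + 1) = 4 * dk (n + 2) by rw [hsucc]; ring]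
              field_simp
              ring
          _ ≤ 150 * B / dk (n + 2) ^ 2 := by
              rw [div_le_div_iff_of_pos_right (by positivity)]
              linarith
    have hystep : ∀ n, n + 2 ≤ N → |φ (y n) - φ (y (n + 1))| ≤ 12 * B' * (d ^ e * q ^ (n + 2)) := by
      intro n hn2
      have hn1 : n + 1 ≤ N := by omega
      obtain ⟨hu1, hu2⟩ := hymem n hn1
      obtain ⟨hv1, hv2⟩ := hymem (n + 1) hn2
      have hsucc : dk (n + 2) = dk (n + 1) / 4 := hdksucc (n + 1)
      have hdkN2 : dk N ≤ dk (n + 2) := hdkN (n + 2) hn2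
      have hdk2pos := hdk0 (n + 2)
      rw [abs_sub_comm]
      apply step (y (n + 1)) (y n) (n + 2)
      · linarith [hNgt]
      · linarith
      · calc g (y n) (y (n + 1)) ≤ 12 * G (y n) / dk (n + 2) := hyg n hn2
          _ ≤ 12 * (12 * B / dk (n + 1)) / dk (n + 2) := by
              rw [div_le_div_iff_of_pos_right hdk2pos]
              linarith [hyG n hn1]
          _ = 36 * B / dk (n + 2) ^ 2 := by
              have hne : dk (n + 2) ≠ 0 := hdk2pos.ne'
              rw [show dk (n + 1) = 4 * dk (n + 2) by rw [hsucc]; ring]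
              field_simp
              ring
          _ ≤ 150 * B / dk (n + 2) ^ 2 := by
              rw [div_le_div_iff_of_pos_right (by positivity)]
              linarith
    -- cross estimate
    have hcross' : |φ (y 0) - φ (x 0)| ≤ 12 * B' * (d ^ e * q ^ 1) := by
      obtain ⟨hu1, hu2⟩ := hxmem 0 hN1
      obtain ⟨hv1, hv2⟩ := hymem 0 hN1
      have hdk1pos := hdk0 1
      apply step (y 0) (x 0) 1
      · -- a < y 0 - x 0 ; it is > d/3 > a
        have h41 : dk 1 = d / 4 := hd1
        linarith
      · have h41 : dk 1 = d / 4 := hd1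
        linarith
      · calc g (x 0) (y 0) ≤ 12 * G (x 0) / dk 1 := hcross
          _ ≤ 12 * (12 * B / dk 1) / dk 1 := by
              rw [div_le_div_iff_of_pos_right hdk1pos]
              linarith [hxG 0 hN1]
          _ = 144 * B / dk 1 ^ 2 := by
              have hne : dk 1 ≠ 0 := hdk1pos.ne'
              field_simp
              ring
          _ ≤ 150 * B / dk 1 ^ 2 := by
              rw [div_le_div_iff_of_pos_right (by positivity)]
              linarith
    -- telescoping sums
    have hsum : ∀ z : ℕ → ℝ, (∀ n, n + 2 ≤ N → |z n - z (n + 1)| ≤ 12 * B' * (d ^ e * q ^ (n + 2))) →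
        |z 0 - z m| ≤ 12 * B' * (d ^ e * (1 / (1 - q))) := by
      intro z hz
      have htel : z 0 - z m = ∑ n ∈ Finset.range m, (z n - z (n + 1)) :=
        (Finset.sum_range_sub' z m).symm
      calc |z 0 - z m| = |∑ n ∈ Finset.range m, (z n - z (n + 1))| := by rw [htel]
        _ ≤ ∑ n ∈ Finset.range m, |z n - z (n + 1)| := Finset.abs_sum_le_sum_abs _ _
        _ ≤ ∑ n ∈ Finset.range m, 12 * B' * d ^ e * q ^ (n + 2) := by
            apply Finset.sum_le_sum
            intro n hn
            have : n + 2 ≤ N := by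
              have := Finset.mem_range.mp hn
              omega
            calc |z n - z (n + 1)| ≤ 12 * B' * (d ^ e * q ^ (n + 2)) := hz n this
              _ = 12 * B' * d ^ e * q ^ (n + 2) := by ring
        _ = 12 * B' * d ^ e * ∑ n ∈ Finset.range m, q ^ (n + 2) := by
            rw [Finset.mul_sum]
        _ ≤ 12 * B' * d ^ e * (1 / (1 - q)) := by
            apply mul_le_mul_of_nonneg_left (hgeom m)
            positivity
        _ = 12 * B' * (d ^ e * (1 / (1 - q))) := by ring
    have hxsum := hsum (fun n => φ (x n)) hxstep
    have hysum := hsum (fun n => φ (y n)) hystep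
    -- endpoint jumps
    have hxmIcc : x m ∈ Set.Icc (0:ℝ) T := hIsub (m + 1) (by omega) (hxmem m (le_of_eq hmN))
    have hymIcc : y m ∈ Set.Icc (0:ℝ) T := hJsub (m + 1) (by omega) (hymem m (le_of_eq hmN))
    have hx0Icc : x 0 ∈ Set.Icc (0:ℝ) T := hIsub 1 le_rfl (hxmem 0 hN1)
    have hy0Icc : y 0 ∈ Set.Icc (0:ℝ) T := hJsub 1 le_rfl (hymem 0 hN1)
    have hyend : |F t - F (y m)| ≤ M := by
      apply hM (y m) hymIcc t ht
      obtain ⟨hu1, hu2⟩ := hymem m (le_of_eq hmN)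
      rw [hmN] at hu1 hu2
      rw [abs_of_nonneg (by linarith [hdk0 N])]
      linarith [hNle, hdk0 N]
    have hxend : |F (x m) - F s| ≤ M := by
      apply hM s hs (x m) hxmIcc
      obtain ⟨hu1, hu2⟩ := hxmem m (le_of_eq hmN)
      rw [hmN] at hu1 hu2
      rw [abs_of_nonneg (by linarith [hdk0 N])]
      linarith [hNle, hdk0 N]
    -- assemble
    have hkey : F t - F s = (F t - F (y m)) + ((φ (y m) - φ (y 0)) + ((φ (y 0) - φ (x 0)) +
        ((φ (x 0) - φ (x m)) + (F (x m) - F s)))) := by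
      rw [hφe (x m) hxmIcc, hφe (y m) hymIcc, hφe (x 0) hx0Icc, hφe (y 0) hy0Icc]
      ring
    have hysum' : |φ (y m) - φ (y 0)| ≤ 12 * B' * (d ^ e * (1 / (1 - q))) := by
      rw [abs_sub_comm]; exact hysum
    have habs5 : |F t - F s| ≤ |F t - F (y m)| + (|φ (y m) - φ (y 0)| + (|φ (y 0) - φ (x 0)| +
        (|φ (x 0) - φ (x m)| + |F (x m) - F s|))) := by
      rw [hkey]
      refine (abs_add_le _ _).trans (add_le_add_right ?_ _)
      refine (abs_add_le _ _).trans (add_le_add_right ?_ _)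
      refine (abs_add_le _ _).trans (add_le_add_right ?_ _)
      exact abs_add_le _ _
    have hq1le : q ^ 1 ≤ 1 := by
      rw [pow_one]; exact hq1.le
    have hcross'' : |φ (y 0) - φ (x 0)| ≤ 12 * B' * d ^ e := by
      calc |φ (y 0) - φ (x 0)| ≤ 12 * B' * (d ^ e * q ^ 1) := hcross'
        _ ≤ 12 * B' * d ^ e := by
            have h0 : 0 ≤ 12 * B' := by linarith
            nlinarith [mul_nonneg h0 hde0]
    have hdeδ : d ^ e ≤ δ ^ e := rpow_le_rpow hd0 hdδ he0.le
    have hfin1 : B' * d ^ e ≤ B' * δ ^ e := mul_le_mul_of_nonneg_left hdeδ hB'0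
    have hr0 : (0:ℝ) ≤ 1 / (1 - q) := by positivity
    calc |F t - F s| ≤ |F t - F (y m)| + (|φ (y m) - φ (y 0)| + (|φ (y 0) - φ (x 0)| +
        (|φ (x 0) - φ (x m)| + |F (x m) - F s|))) := habs5
      _ ≤ M + (12 * B' * (d ^ e * (1 / (1 - q))) + (12 * B' * d ^ e +
          (12 * B' * (d ^ e * (1 / (1 - q))) + M))) := by
          exact add_le_add hyend (add_le_add hysum' (add_le_add hcross'' (add_le_add hxsum hxend)))
      _ = 2 * M + 12 * (1 + 2 * (1 / (1 - q))) * (B' * d ^ e) := by ring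
      _ ≤ 2 * M + 12 * (1 + 2 * (1 / (1 - q))) * (B' * δ ^ e) := by
          apply add_le_add_right
          apply mul_le_mul_of_nonneg_left hfin1
          positivity
      _ = 2 * M + C * B' * δ ^ e := by
          rw [hC]
          ring

end
end

section
/- Let d ≥ 1. For ε ∈ (0,1) and μ > 0 define I_N(ε) := ∫_{(𝕋^d)^N} ∏_{1≤i<j≤N} 1_{dist(x_i,x_j)>ε} dx_1⋯dx_N (with I_0 := 1), the partition function 𝒵(μ,ε) := Σ_{N≥0} (μ^N/N!) I_N(ε), and the mean particle number ⟨𝒩⟩(μ,ε) := 𝒵(μ,ε)^{−1} Σ_{N≥1} N (μ^N/N!) I_N(ε). Then for every family (μ_ε)_{ε>0} with μ_ε → ∞ and μ_ε ε^d → 0 as ε → 0, one has ⟨𝒩⟩(μ_ε,ε)/μ_ε → 1 as ε → 0. -/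
open scoped Classical

open MeasureTheory Real Filter Topology

noncomputable section

abbrev Torus (d : ℕ) := Fin d → UnitAddCircle

/-- The hard-sphere exclusion set `𝒟^ε_N`. -/
def excl (d : ℕ) (ε : ℝ) (N : ℕ) : Set (Fin N → Torus d) :=
  {X | ∀ i j, i ≠ j → ε < dist (X i) (X j)}

/-- `I_N(ε) = ∫_{(𝕋^d)^N} ∏_{i<j} 1_{dist(x_i,x_j) > ε} dX_N` (with `I_0 = 1`). -/
def exclInt (d : ℕ) (ε : ℝ) (N : ℕ) : ℝ := (volume (excl d ε N)).toReal

/-- The grand canonical partition function `𝒵(μ, ε)`. -/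
def partFun (d : ℕ) (ε μ : ℝ) : ℝ := ∑' N : ℕ, μ ^ N / N.factorial * exclInt d ε N

/-- The mean particle number `⟨𝒩⟩(μ, ε)`. -/
def meanN (d : ℕ) (ε μ : ℝ) : ℝ :=
  (partFun d ε μ)⁻¹ * ∑' N : ℕ, (N : ℝ) * (μ ^ N / N.factorial) * exclInt d ε N

namespace HSAux

instance : IsProbabilityMeasure (volume : Measure UnitAddCircle) :=
  ⟨UnitAddCircle.measure_univ⟩

instance (d : ℕ) : IsProbabilityMeasure (volume : Measure (Torus d)) :=
  MeasureTheory.Measure.pi.instIsProbabilityMeasure _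

instance (d N : ℕ) : IsProbabilityMeasure (volume : Measure (Fin N → Torus d)) :=
  MeasureTheory.Measure.pi.instIsProbabilityMeasure _

lemma excl_isOpen (d : ℕ) (ε : ℝ) (N : ℕ) : IsOpen (excl d ε N) := by
  have : excl d ε N = ⋂ i, ⋂ j, {X : Fin N → Torus d | i ≠ j → ε < dist (X i) (X j)} := by
    ext X; simp [excl, Set.mem_iInter]
  rw [this]
  refine isOpen_iInter_of_finite fun i => isOpen_iInter_of_finite fun j => ?_
  by_cases hij : i = j
  · simp [hij]
  · have : {X : Fin N → Torus d | i ≠ j → ε < dist (X i) (X j)}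
        = {X : Fin N → Torus d | ε < dist (X i) (X j)} := by
      ext X; simp [hij]
    rw [this]
    exact isOpen_lt continuous_const
      (Continuous.dist (continuous_apply i) (continuous_apply j))

lemma excl_measurableSet (d : ℕ) (ε : ℝ) (N : ℕ) : MeasurableSet (excl d ε N) :=
  (excl_isOpen d ε N).measurableSet

lemma exclInt_nonneg (d : ℕ) (ε : ℝ) (N : ℕ) : 0 ≤ exclInt d ε N :=
  ENNReal.toReal_nonneg

lemma exclInt_le_one (d : ℕ) (ε : ℝ) (N : ℕ) : exclInt d ε N ≤ 1 := by
  have h : volume (excl d ε N) ≤ 1 := prob_le_one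
  simpa [exclInt] using ENNReal.toReal_mono ENNReal.one_ne_top h

lemma exclInt_zero (d : ℕ) (ε : ℝ) : exclInt d ε 0 = 1 := by
  have : excl d ε 0 = Set.univ := by
    ext X; simp only [excl, Set.mem_setOf_eq, Set.mem_univ, iff_true]
    intro i; exact absurd i.2 (by omega)
  simp [exclInt, this]

/-- The "slice" description set. -/
def Sset (d : ℕ) (ε : ℝ) (N : ℕ) : Set (Torus d × (Fin N → Torus d)) :=
  {p | p.2 ∈ excl d ε N ∧ ∀ i, ε < dist p.1 (p.2 i)}

lemma Sset_isOpen (d : ℕ) (ε : ℝ) (N : ℕ) : IsOpen (Sset d ε N) := by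
  have : Sset d ε N = (Prod.snd ⁻¹' excl d ε N) ∩
      ⋂ i, {p : Torus d × (Fin N → Torus d) | ε < dist p.1 (p.2 i)} := by
    ext p; simp [Sset, Set.mem_iInter]
  rw [this]
  refine ((excl_isOpen d ε N).preimage continuous_snd).inter
    (isOpen_iInter_of_finite fun i => ?_)
  exact isOpen_lt continuous_const
    (Continuous.dist continuous_fst ((continuous_apply i).comp continuous_snd))

lemma vol_excl_succ (d : ℕ) (ε : ℝ) (N : ℕ) :
    volume (excl d ε (N + 1)) = (volume.prod volume) (Sset d ε N) := by
  have hmp := measurePreserving_piFinSuccAbove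
    (fun _ : Fin (N + 1) => (volume : Measure (Torus d))) (Fin.last N)
  have hmeas : MeasurableSet (Sset d ε N) := (Sset_isOpen d ε N).measurableSet
  have hkey := hmp.measure_preimage hmeas.nullMeasurableSet
  have hset : (⇑(MeasurableEquiv.piFinSuccAbove (fun _ : Fin (N + 1) => Torus d) (Fin.last N)))
      ⁻¹' Sset d ε N = excl d ε (N + 1) := by
    ext X
    simp only [Set.mem_preimage, MeasurableEquiv.piFinSuccAbove_apply, Sset, Set.mem_setOf_eq,
      Fin.insertNthEquiv_symm_apply, Fin.removeNth, Fin.succAbove_last, excl]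
    constructor
    · rintro ⟨h1, h2⟩ i j hij
      induction i using Fin.lastCases with
      | last =>
        induction j using Fin.lastCases with
        | last => exact absurd rfl hij
        | cast j' => exact h2 j'
      | cast i' =>
        induction j using Fin.lastCases with
        | last => rw [dist_comm]; exact h2 i'
        | cast j' => exact h1 i' j' (by simpa [Fin.castSucc_inj] using hij)
    · rintro hX
      refine ⟨fun i j hij => hX _ _ (by simpa using hij), fun i => hX _ _ ?_⟩
      exact (Fin.castSucc_lt_last i).ne'
  rw [← hset]
  exact hkey

lemma exclInt_succ_le (d : ℕ) (ε : ℝ) (N : ℕ) :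
    exclInt d ε (N + 1) ≤ exclInt d ε N := by
  have h1 : volume (excl d ε (N + 1)) ≤ volume (excl d ε N) := by
    rw [vol_excl_succ]
    calc (volume.prod volume) (Sset d ε N)
        ≤ (volume.prod volume) (Set.univ ×ˢ excl d ε N) := by
          apply measure_mono; rintro ⟨x, Y⟩ ⟨h1, _⟩
          exact ⟨Set.mem_univ _, h1⟩
      _ = volume (excl d ε N) := by rw [Measure.prod_prod, measure_univ, one_mul]
  exact ENNReal.toReal_mono (measure_ne_top _ _) h1

lemma volume_closedBall_torus (d : ℕ) {ε : ℝ} (hε : 0 ≤ ε) (y : Torus d) :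
    volume (Metric.closedBall y ε) ≤ ENNReal.ofReal ((2 * ε) ^ d) := by
  rw [closedBall_pi _ hε, volume_pi_pi]
  calc ∏ i : Fin d, volume (Metric.closedBall (y i) ε)
      ≤ ∏ _i : Fin d, ENNReal.ofReal (2 * ε) := by
        refine Finset.prod_le_prod' fun i _ => ?_
        rw [AddCircle.volume_closedBall]
        exact ENNReal.ofReal_le_ofReal (min_le_right _ _)
    _ = ENNReal.ofReal ((2 * ε) ^ d) := by
        rw [Finset.prod_const, Finset.card_univ, Fintype.card_fin,
          ← ENNReal.ofReal_pow (by linarith)]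

lemma exclInt_succ_ge (d : ℕ) {ε : ℝ} (hε : 0 ≤ ε) (N : ℕ) :
    (1 - N * (2 * ε) ^ d) * exclInt d ε N ≤ exclInt d ε (N + 1) := by
  set b : ℝ := (2 * ε) ^ d with hb
  have hb0 : 0 ≤ b := pow_nonneg (by linarith) _
  by_cases hpos : 0 ≤ 1 - (N : ℝ) * b
  swap
  · push_neg at hpos
    have : (1 - (N : ℝ) * b) * exclInt d ε N ≤ 0 :=
      mul_nonpos_of_nonpos_of_nonneg (by linarith) (exclInt_nonneg d ε N)
    exact this.trans (exclInt_nonneg d ε (N + 1))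
  -- main case
  have hmeas : MeasurableSet (Sset d ε N) := (Sset_isOpen d ε N).measurableSet
  have key : ENNReal.ofReal (1 - N * b) * volume (excl d ε N)
      ≤ volume (excl d ε (N + 1)) := by
    rw [vol_excl_succ, Measure.prod_apply_symm hmeas]
    have hpoint : ∀ Y : Fin N → Torus d,
        (excl d ε N).indicator (fun _ => ENNReal.ofReal (1 - N * b)) Y
          ≤ volume ((fun x => (x, Y)) ⁻¹' Sset d ε N) := by
      intro Y
      by_cases hY : Y ∈ excl d ε N
      · rw [Set.indicator_of_mem hY]
        have hsub : (⋃ i, Metric.closedBall (Y i) ε)ᶜ ⊆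
            (fun x => (x, Y)) ⁻¹' Sset d ε N := by
          intro x hx
          refine ⟨hY, fun i => ?_⟩
          have : x ∉ Metric.closedBall (Y i) ε := fun h => hx (Set.mem_iUnion.2 ⟨i, h⟩)
          simpa [Metric.mem_closedBall, not_le] using this
        refine le_trans ?_ (measure_mono hsub)
        rw [measure_compl (MeasurableSet.iUnion fun i =>
          measurableSet_closedBall) (measure_ne_top _ _), measure_univ]
        have hub : volume (⋃ i, Metric.closedBall (Y i) ε)
            ≤ (N : ENNReal) * ENNReal.ofReal b := by
          refine le_trans (measure_iUnion_le _) ?_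
          rw [tsum_fintype]
          calc ∑ i : Fin N, volume (Metric.closedBall (Y i) ε)
              ≤ ∑ _i : Fin N, ENNReal.ofReal b :=
                Finset.sum_le_sum fun i _ => volume_closedBall_torus d hε (Y i)
            _ = (N : ENNReal) * ENNReal.ofReal b := by
                rw [Finset.sum_const, Finset.card_univ, Fintype.card_fin, nsmul_eq_mul]
          
        have hcast : ((N : ENNReal)) * ENNReal.ofReal b = ENNReal.ofReal ((N : ℝ) * b) := by
          rw [ENNReal.ofReal_mul (show (0:ℝ) ≤ (N:ℝ) by positivity), ENNReal.ofReal_natCast]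
        have h2 : ENNReal.ofReal (1 - N * b) = 1 - ENNReal.ofReal ((N : ℝ) * b) := by
          rw [ENNReal.ofReal_sub _ (by positivity), ENNReal.ofReal_one]
        rw [h2]
        exact tsub_le_tsub_left (hub.trans_eq hcast) 1
      · rw [Set.indicator_of_notMem hY]; exact zero_le
    calc ENNReal.ofReal (1 - N * b) * volume (excl d ε N)
        = ∫⁻ Y, (excl d ε N).indicator (fun _ => ENNReal.ofReal (1 - N * b)) Y := by
          rw [lintegral_indicator_const (excl_measurableSet d ε N)]
      _ ≤ ∫⁻ Y, volume ((fun x => (x, Y)) ⁻¹' Sset d ε N) := lintegral_mono hpoint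
  -- pass to toReal
  have h1 : ((ENNReal.ofReal (1 - N * b) * volume (excl d ε N))).toReal
      = (1 - N * b) * exclInt d ε N := by
    rw [ENNReal.toReal_mul, ENNReal.toReal_ofReal hpos]; rfl
  rw [← h1]
  exact ENNReal.toReal_mono (measure_ne_top _ _) key

lemma ratio_bounds (d : ℕ) {ε m : ℝ} (hε : 0 ≤ ε) (hm : 0 < m) :
    (1 + m * (2 * ε) ^ d)⁻¹ ≤ meanN d ε m / m ∧ meanN d ε m / m ≤ 1 := by
  set b : ℝ := (2 * ε) ^ d with hbdef
  have hb0 : 0 ≤ b := pow_nonneg (by linarith) _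
  set a : ℕ → ℝ := fun N => m ^ N / N.factorial * exclInt d ε N with ha_def
  set g : ℕ → ℝ := fun N => m ^ N / N.factorial * exclInt d ε (N + 1) with hg_def
  set f : ℕ → ℝ := fun N => (N : ℝ) * (m ^ N / N.factorial) * exclInt d ε N with hf_def
  have hcn : ∀ N : ℕ, (0 : ℝ) ≤ m ^ N / N.factorial := fun N => by positivity
  have ha : Summable a := by
    refine Summable.of_nonneg_of_le (fun N => mul_nonneg (hcn N) (exclInt_nonneg d ε N))
      (fun N => ?_) (Real.summable_pow_div_factorial m)
    calc a N ≤ m ^ N / N.factorial * 1 :=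
          mul_le_mul_of_nonneg_left (exclInt_le_one d ε N) (hcn N)
      _ = m ^ N / N.factorial := mul_one _
  have hg : Summable g := by
    refine Summable.of_nonneg_of_le (fun N => mul_nonneg (hcn N) (exclInt_nonneg d ε _))
      (fun N => ?_) (Real.summable_pow_div_factorial m)
    calc g N ≤ m ^ N / N.factorial * 1 :=
          mul_le_mul_of_nonneg_left (exclInt_le_one d ε _) (hcn N)
      _ = m ^ N / N.factorial := mul_one _
  have hshift : ∀ n : ℕ, f (n + 1) = m * g n := by
    intro n
    simp only [hf_def, hg_def]
    rw [Nat.factorial_succ]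
    have h1 : ((n : ℝ) + 1) ≠ 0 := by positivity
    have h2 : (n.factorial : ℝ) ≠ 0 := Nat.cast_ne_zero.2 n.factorial_ne_zero
    push_cast
    field_simp
    ring
  have hf : Summable f := by
    rw [← summable_nat_add_iff 1]
    simpa only [hshift] using hg.mul_left m
  have hfsum : ∑' N, f N = m * ∑' N, g N := by
    have h1 : ∑' n : ℕ, f (n + 1) = m * ∑' N, g N := by
      rw [show (fun n : ℕ => f (n + 1)) = fun n => m * g n from funext hshift, tsum_mul_left]
    have h0 : f 0 = 0 := by simp [hf_def]
    rw [Summable.tsum_eq_zero_add hf, h0, zero_add, h1]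
  have hZ_def : partFun d ε m = ∑' N, a N := rfl
  have hZ1 : (1 : ℝ) ≤ partFun d ε m := by
    have := Summable.le_tsum ha 0 (fun N _ => mul_nonneg (hcn N) (exclInt_nonneg d ε N))
    rw [hZ_def]
    refine le_trans ?_ this
    simp [ha_def, exclInt_zero]
  have hZpos : 0 < partFun d ε m := lt_of_lt_of_le one_pos hZ1
  have hmean : meanN d ε m = (partFun d ε m)⁻¹ * (m * ∑' N, g N) := by
    rw [meanN, ← hfsum]
  have hratio : meanN d ε m / m = (∑' N, g N) / partFun d ε m := by
    rw [hmean]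
    field_simp
  -- upper bound
  have hupper : ∑' N, g N ≤ ∑' N, a N := by
    refine Summable.tsum_le_tsum (fun N => ?_) hg ha
    exact mul_le_mul_of_nonneg_left (exclInt_succ_le d ε N) (hcn N)
  have hSnn : 0 ≤ ∑' N, g N :=
    tsum_nonneg fun N => mul_nonneg (hcn N) (exclInt_nonneg d ε _)
  constructor
  · -- lower bound
    have hterm : ∀ N : ℕ, a N - b * f N ≤ g N := by
      intro N
      have hk := exclInt_succ_ge d hε N
      have := mul_le_mul_of_nonneg_left hk (hcn N)
      calc a N - b * f N
          = m ^ N / N.factorial * ((1 - N * b) * exclInt d ε N) := by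
            simp only [ha_def, hf_def]; ring
        _ ≤ g N := this
    have hsub : Summable (fun N => a N - b * f N) := ha.sub (hf.mul_left b)
    have hlow : ∑' N, a N - b * (m * ∑' N, g N) ≤ ∑' N, g N := by
      have := Summable.tsum_le_tsum hterm hsub hg
      rwa [Summable.tsum_sub ha (hf.mul_left b), tsum_mul_left, hfsum] at this
    rw [hratio, le_div_iff₀ hZpos]
    have hd0 : (0 : ℝ) < 1 + m * b := by positivity
    rw [inv_mul_le_iff₀ hd0]
    rw [hZ_def]
    nlinarith [hSnn]
  · rw [hratio, div_le_one hZpos, hZ_def]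
    exact hupper

end HSAux

/-- for any family `μ_ε → ∞` with `μ_ε ε^d → 0`, the mean particle
number satisfies `⟨𝒩⟩(μ_ε, ε) / μ_ε → 1` as `ε → 0`. -/
theorem meanN_div_mu_tendsto_one (d : ℕ) (hd : 1 ≤ d) (μ : ℝ → ℝ)
    (hμ : Tendsto μ (𝓝[>] (0 : ℝ)) atTop)
    (hμε : Tendsto (fun ε => μ ε * ε ^ d) (𝓝[>] (0 : ℝ)) (𝓝 0)) :
    Tendsto (fun ε => meanN d ε (μ ε) / μ ε) (𝓝[>] (0 : ℝ)) (𝓝 1) := by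
  have hεpos : ∀ᶠ ε in 𝓝[>] (0 : ℝ), 0 < ε := self_mem_nhdsWithin
  have hμpos : ∀ᶠ ε in 𝓝[>] (0 : ℝ), 0 < μ ε := hμ.eventually_gt_atTop 0
  set L : ℝ → ℝ := fun ε => (1 + 2 ^ d * (μ ε * ε ^ d))⁻¹ with hL
  have hLlim : Tendsto L (𝓝[>] (0 : ℝ)) (𝓝 1) := by
    have h1 : Tendsto (fun ε => 1 + 2 ^ d * (μ ε * ε ^ d)) (𝓝[>] (0 : ℝ))
        (𝓝 (1 + 2 ^ d * 0)) := tendsto_const_nhds.add (hμε.const_mul _)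
    have := (h1.inv₀ (by norm_num)).congr (fun ε => rfl)
    simpa using this
  have hlow : ∀ᶠ ε in 𝓝[>] (0 : ℝ), L ε ≤ meanN d ε (μ ε) / μ ε := by
    filter_upwards [hεpos, hμpos] with ε hε hm
    have := (HSAux.ratio_bounds d hε.le hm).1
    have heq : μ ε * (2 * ε) ^ d = 2 ^ d * (μ ε * ε ^ d) := by
      rw [mul_pow]; ring
    rwa [heq] at this
  have hup : ∀ᶠ ε in 𝓝[>] (0 : ℝ), meanN d ε (μ ε) / μ ε ≤ 1 := by
    filter_upwards [hεpos, hμpos] with ε hε hm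
    exact (HSAux.ratio_bounds d hε.le hm).2
  exact tendsto_of_tendsto_of_tendsto_of_le_of_le' hLlim tendsto_const_nhds hlow hup

end
end

section
/- Let d ≥ 1 and let f, g : ℝ^d → ℝ be Lipschitz functions of at most polynomial growth (so that all integrals below converge absolutely). Then ∫_{ℝ^d} f(v) (ℒg)(v) M(v) dv = (1/4) ∫_{ℝ^d×ℝ^d×𝕊^{d−1}} M(v) M(v*) ((v−v*)·ω)_+ Δf(v,v*,ω) Δg(v,v*,ω) dv dv* dω. In particular, ∫ f (ℒg) M dv = ∫ g (ℒf) M dv (symmetry of ℒ in L²(M dv)) and ∫ g (ℒg) M dv ≥ 0 (nonnegativity of ℒ). -/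
open MeasureTheory Real Filter Topology
open scoped RealInnerProductSpace

noncomputable section

abbrev Rd (d : ℕ) := EuclideanSpace ℝ (Fin d)

/-- The unit sphere `𝕊^{d-1} ⊂ ℝ^d`. -/
abbrev Sph (d : ℕ) := Metric.sphere (0 : Rd d) 1

/-- The Maxwellian density on `ℝ^d`. -/
def Maxw (d : ℕ) (v : Rd d) : ℝ := (2 * π) ^ (-(d : ℝ) / 2) * Real.exp (-‖v‖ ^ 2 / 2)

/-- The scattered velocity `v' = v - ((v - v*)·ω) ω`. -/
def vOut (d : ℕ) (v vs : Rd d) (ω : Sph d) : Rd d :=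
  v - ⟪v - vs, (ω : Rd d)⟫ • (ω : Rd d)

/-- The scattered velocity `v*' = v* + ((v - v*)·ω) ω`. -/
def vsOut (d : ℕ) (v vs : Rd d) (ω : Sph d) : Rd d :=
  vs + ⟪v - vs, (ω : Rd d)⟫ • (ω : Rd d)

/-- `Δh(v, v*, ω) = h(v') + h(v*') - h(v) - h(v*)`. -/
def collDiff (d : ℕ) (h : Rd d → ℝ) (v vs : Rd d) (ω : Sph d) : ℝ :=
  h (vOut d v vs ω) + h (vsOut d v vs ω) - h v - h vs

/-- The uniform (rotation invariant) measure on the unit sphere, obtained from the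
Lebesgue measure by the polar decomposition. -/
def sphMeasure (d : ℕ) : Measure (Sph d) := (volume : Measure (Rd d)).toSphere

/-- The hard-sphere linearized Boltzmann collision operator
`(ℒg)(v) = ∫ M(v*) ((v-v*)·ω)₊ [g(v) + g(v*) - g(v') - g(v*')] dv* dω`. -/
def linL (d : ℕ) (g : Rd d → ℝ) (v : Rd d) : ℝ :=
  ∫ p : Rd d × Sph d,
    Maxw d p.1 * max ⟪v - p.1, (p.2 : Rd d)⟫ 0 * (-collDiff d g v p.1 p.2)
    ∂((volume : Measure (Rd d)).prod (sphMeasure d))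

end

noncomputable section
namespace BoltzAux
variable {d : ℕ}

lemma norm_omega (ω : Sph d) : ‖(ω : Rd d)‖ = 1 := by
  have := ω.2; simpa using this

lemma inner_omega_self (ω : Sph d) : ⟪(ω : Rd d), (ω : Rd d)⟫ = 1 := by
  rw [real_inner_self_eq_norm_sq, norm_omega]; norm_num

lemma inner_out (v vs : Rd d) (ω : Sph d) :
    ⟪vOut d v vs ω - vsOut d v vs ω, (ω : Rd d)⟫ = -⟪v - vs, (ω : Rd d)⟫ := by
  simp only [vOut, vsOut]
  have h : v - ⟪v - vs, (ω : Rd d)⟫ • (ω : Rd d) - (vs + ⟪v - vs, (ω : Rd d)⟫ • (ω : Rd d))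
      = (v - vs) - (2 * ⟪v - vs, (ω : Rd d)⟫) • (ω : Rd d) := by module
  rw [h, inner_sub_left, real_inner_smul_left, inner_omega_self]
  ring

lemma vOut_invol (v vs : Rd d) (ω : Sph d) :
    vOut d (vOut d v vs ω) (vsOut d v vs ω) ω = v := by
  rw [vOut, inner_out]
  simp only [vOut, neg_smul, sub_neg_eq_add, sub_add_cancel]

lemma vsOut_invol (v vs : Rd d) (ω : Sph d) :
    vsOut d (vOut d v vs ω) (vsOut d v vs ω) ω = vs := by
  rw [vsOut, inner_out]
  simp only [vsOut, neg_smul, add_neg_cancel_right]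

lemma vOut_swap (v vs : Rd d) (ω : Sph d) : vOut d vs v ω = vsOut d v vs ω := by
  rw [vOut, vsOut]
  have h : ⟪vs - v, (ω : Rd d)⟫ = -⟪v - vs, (ω : Rd d)⟫ := by
    rw [← inner_neg_left]; congr 1; module
  rw [h]; module

lemma vsOut_swap (v vs : Rd d) (ω : Sph d) : vsOut d vs v ω = vOut d v vs ω := by
  rw [vOut, vsOut]
  have h : ⟪vs - v, (ω : Rd d)⟫ = -⟪v - vs, (ω : Rd d)⟫ := by
    rw [← inner_neg_left]; congr 1; module
  rw [h]; module

lemma vOut_neg (v vs : Rd d) (ω : Sph d) : vOut d v vs (-ω) = vOut d v vs ω := by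
  rw [vOut, vOut]
  have h : ((-ω : Sph d) : Rd d) = -(ω : Rd d) := by simp
  rw [h, inner_neg_right]; module

lemma vsOut_neg (v vs : Rd d) (ω : Sph d) : vsOut d v vs (-ω) = vsOut d v vs ω := by
  rw [vsOut, vsOut]
  have h : ((-ω : Sph d) : Rd d) = -(ω : Rd d) := by simp
  rw [h, inner_neg_right]; module

lemma norm_sq_out (v vs : Rd d) (ω : Sph d) :
    ‖vOut d v vs ω‖ ^ 2 + ‖vsOut d v vs ω‖ ^ 2 = ‖v‖ ^ 2 + ‖vs‖ ^ 2 := by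
  set c := ⟪v - vs, (ω : Rd d)⟫ with hc
  have h1 : ‖vOut d v vs ω‖ ^ 2 = ‖v‖ ^ 2 - 2 * (c * ⟪v, (ω : Rd d)⟫) + c ^ 2 := by
    rw [vOut, @norm_sub_sq_real, real_inner_smul_right, norm_smul, norm_omega,
      Real.norm_eq_abs, mul_one, sq_abs]
  have h2 : ‖vsOut d v vs ω‖ ^ 2 = ‖vs‖ ^ 2 + 2 * (c * ⟪vs, (ω : Rd d)⟫) + c ^ 2 := by
    rw [vsOut, @norm_add_sq_real, real_inner_smul_right, norm_smul, norm_omega,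
      Real.norm_eq_abs, mul_one, sq_abs]
  have h3 : ⟪v, (ω : Rd d)⟫ - ⟪vs, (ω : Rd d)⟫ = c := by rw [hc, inner_sub_left]
  rw [h1, h2]
  linear_combination (-2 * c) * h3

lemma collDiff_swap (h : Rd d → ℝ) (v vs : Rd d) (ω : Sph d) :
    collDiff d h vs v ω = collDiff d h v vs ω := by
  rw [collDiff, collDiff, vOut_swap v vs, vsOut_swap v vs]; ring

lemma collDiff_neg_omega (h : Rd d → ℝ) (v vs : Rd d) (ω : Sph d) :
    collDiff d h v vs (-ω) = collDiff d h v vs ω := by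
  rw [collDiff, collDiff, vOut_neg, vsOut_neg]

lemma collDiff_out (h : Rd d → ℝ) (v vs : Rd d) (ω : Sph d) :
    collDiff d h (vOut d v vs ω) (vsOut d v vs ω) ω = -collDiff d h v vs ω := by
  rw [collDiff, collDiff, vOut_invol, vsOut_invol]; ring

lemma maxw_nonneg (v : Rd d) : 0 ≤ Maxw d v := by
  rw [Maxw]; positivity

lemma maxw_mul_out (v vs : Rd d) (ω : Sph d) :
    Maxw d (vOut d v vs ω) * Maxw d (vsOut d v vs ω) = Maxw d v * Maxw d vs := by
  have h := norm_sq_out v vs ω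
  simp only [Maxw]
  rw [mul_mul_mul_comm, mul_mul_mul_comm ((2 * π) ^ (-(d : ℝ) / 2)) _ ((2 * π) ^ (-(d : ℝ) / 2))]
  congr 1
  rw [← Real.exp_add, ← Real.exp_add]
  congr 1
  linarith [h]

lemma norm_vOut_le (v vs : Rd d) (ω : Sph d) : ‖vOut d v vs ω‖ ≤ ‖v‖ + ‖vs‖ := by
  have h := norm_sq_out v vs ω
  nlinarith [norm_nonneg (vOut d v vs ω), norm_nonneg (vsOut d v vs ω), norm_nonneg v,
    norm_nonneg vs, sq_nonneg (‖vsOut d v vs ω‖)]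

lemma norm_vsOut_le (v vs : Rd d) (ω : Sph d) : ‖vsOut d v vs ω‖ ≤ ‖v‖ + ‖vs‖ := by
  have h := norm_sq_out v vs ω
  nlinarith [norm_nonneg (vOut d v vs ω), norm_nonneg (vsOut d v vs ω), norm_nonneg v,
    norm_nonneg vs]

end BoltzAux
end
noncomputable section
namespace BoltzAux
variable {d : ℕ}

/-- The collision map `(v, v*) ↦ (v', v*')` as a linear map, for fixed `ω`. -/
def collMap (d : ℕ) (ω : Sph d) : (Rd d × Rd d) →ₗ[ℝ] (Rd d × Rd d) :=
  LinearMap.prod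
    (LinearMap.fst ℝ (Rd d) (Rd d) -
      ((((innerSL ℝ ((ω : Rd d))) : Rd d →ₗ[ℝ] ℝ).comp
        (LinearMap.fst ℝ (Rd d) (Rd d) - LinearMap.snd ℝ (Rd d) (Rd d))).smulRight (ω : Rd d)))
    (LinearMap.snd ℝ (Rd d) (Rd d) +
      ((((innerSL ℝ ((ω : Rd d))) : Rd d →ₗ[ℝ] ℝ).comp
        (LinearMap.fst ℝ (Rd d) (Rd d) - LinearMap.snd ℝ (Rd d) (Rd d))).smulRight (ω : Rd d)))

lemma collMap_apply (ω : Sph d) (p : Rd d × Rd d) :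
    collMap d ω p = (vOut d p.1 p.2 ω, vsOut d p.1 p.2 ω) := by
  simp only [collMap, LinearMap.prod_apply, Function.prod, LinearMap.sub_apply, LinearMap.add_apply,
    LinearMap.fst_apply, LinearMap.snd_apply, LinearMap.smulRight_apply, LinearMap.coe_comp,
    Function.comp_apply, ContinuousLinearMap.coe_coe, innerSL_apply_apply, vOut, vsOut]
  rw [real_inner_comm]

lemma collMap_comp_self (ω : Sph d) :
    (collMap d ω).comp (collMap d ω) = LinearMap.id := by
  apply LinearMap.ext
  intro p
  rw [LinearMap.comp_apply, collMap_apply, collMap_apply]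
  simp only [vOut_invol, vsOut_invol, LinearMap.id_coe, id_eq]

lemma measurePreserving_T (ω : Sph d) :
    MeasurePreserving (fun p : Rd d × Rd d => (vOut d p.1 p.2 ω, vsOut d p.1 p.2 ω))
      ((volume : Measure (Rd d)).prod volume) ((volume : Measure (Rd d)).prod volume) := by
  set μ2 : Measure (Rd d × Rd d) := (volume : Measure (Rd d)).prod volume with hμ2
  haveI : μ2.IsAddHaarMeasure := Measure.prod.instIsAddHaarMeasure _ _
  have hfun : (fun p : Rd d × Rd d => (vOut d p.1 p.2 ω, vsOut d p.1 p.2 ω))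
      = ⇑(collMap d ω) := by
    funext p; rw [collMap_apply]
  have hdet2 : LinearMap.det (collMap d ω) * LinearMap.det (collMap d ω) = 1 := by
    rw [← LinearMap.det_comp, collMap_comp_self, LinearMap.det_id]
  have habs : |(LinearMap.det (collMap d ω))⁻¹| = 1 := by
    rcases mul_self_eq_one_iff.mp hdet2 with h | h <;> rw [h] <;> norm_num
  have hdet : LinearMap.det (collMap d ω) ≠ 0 := by
    intro h; rw [h] at hdet2; norm_num at hdet2
  have hcont : Continuous ⇑(collMap d ω) :=
    LinearMap.continuous_of_finiteDimensional (collMap d ω)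
  refine ⟨by rw [hfun]; exact hcont.measurable, ?_⟩
  rw [hfun, Measure.map_linearMap_addHaar_eq_smul_addHaar μ2 hdet, habs]
  simp

end BoltzAux
end
noncomputable section
namespace BoltzAux
open Set
variable {d : ℕ}

lemma continuous_negSph : Continuous (fun ω : Sph d => -ω) := by
  have h : Continuous (fun ω : Sph d => (-(ω : Rd d))) := continuous_subtype_val.neg
  exact Continuous.subtype_mk h _

lemma measurePreserving_negSph :
    MeasurePreserving (fun ω : Sph d => -ω) (sphMeasure d) (sphMeasure d) := by
  refine ⟨continuous_negSph.measurable, ?_⟩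
  refine Measure.ext fun s hs => ?_
  rw [Measure.map_apply continuous_negSph.measurable hs]
  have hps : MeasurableSet ((fun ω : Sph d => -ω) ⁻¹' s) := continuous_negSph.measurable hs
  rw [sphMeasure, Measure.toSphere_apply' _ hps, Measure.toSphere_apply' _ hs]
  congr 1
  have himg : (Subtype.val '' ((fun ω : Sph d => -ω) ⁻¹' s)) = -(Subtype.val '' s) := by
    ext x
    constructor
    · rintro ⟨ω, hω, rfl⟩
      rw [Set.mem_neg]
      exact ⟨-ω, hω, by simp⟩
    · intro hx
      rw [Set.mem_neg] at hx
      obtain ⟨ω, hω, hωx⟩ := hx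
      refine ⟨-ω, by simpa using hω, by simp [hωx]⟩
  rw [himg, Set.smul_neg, Measure.measure_neg]

lemma maxw_continuous : Continuous (Maxw d) := by
  unfold Maxw
  fun_prop

lemma continuous_vOut : Continuous (fun q : (Rd d × Rd d) × Sph d =>
    vOut d q.1.1 q.1.2 q.2) := by
  unfold vOut
  have h1 : Continuous (fun q : (Rd d × Rd d) × Sph d => ((q.2 : Rd d))) :=
    continuous_subtype_val.comp continuous_snd
  have h2 : Continuous (fun q : (Rd d × Rd d) × Sph d => q.1.1 - q.1.2) := by fun_prop
  have h3 : Continuous (fun q : (Rd d × Rd d) × Sph d => ⟪q.1.1 - q.1.2, (q.2 : Rd d)⟫) :=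
    Continuous.inner h2 h1
  fun_prop

lemma continuous_vsOut : Continuous (fun q : (Rd d × Rd d) × Sph d =>
    vsOut d q.1.1 q.1.2 q.2) := by
  unfold vsOut
  have h1 : Continuous (fun q : (Rd d × Rd d) × Sph d => ((q.2 : Rd d))) :=
    continuous_subtype_val.comp continuous_snd
  have h2 : Continuous (fun q : (Rd d × Rd d) × Sph d => q.1.1 - q.1.2) := by fun_prop
  have h3 : Continuous (fun q : (Rd d × Rd d) × Sph d => ⟪q.1.1 - q.1.2, (q.2 : Rd d)⟫) :=
    Continuous.inner h2 h1
  fun_prop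

instance : IsFiniteMeasure (sphMeasure d) := by unfold sphMeasure; infer_instance

instance : SFinite (sphMeasure d) := inferInstance

/-- The reference measure on `(Rd d × Rd d) × Sph d`. -/
def μQ (d : ℕ) : Measure ((Rd d × Rd d) × Sph d) :=
  (((volume : Measure (Rd d)).prod (volume : Measure (Rd d))).prod (sphMeasure d))

lemma integral_comp_involutive {T : ((Rd d × Rd d) × Sph d) → ((Rd d × Rd d) × Sph d)}
    (hT : Function.Involutive T) (hmp : MeasurePreserving T (μQ d) (μQ d))
    (F : ((Rd d × Rd d) × Sph d) → ℝ) :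
    ∫ q, F (T q) ∂(μQ d) = ∫ q, F q ∂(μQ d) := by
  have e : ((Rd d × Rd d) × Sph d) ≃ᵐ ((Rd d × Rd d) × Sph d) :=
    MeasurableEquiv.ofInvolutive T hT hmp.measurable
  exact hmp.integral_comp (MeasurableEquiv.measurableEmbedding
    (MeasurableEquiv.ofInvolutive T hT hmp.measurable)) F

/-- swap transform -/
lemma measurePreserving_sigma :
    MeasurePreserving (fun q : (Rd d × Rd d) × Sph d => ((q.1.2, q.1.1), q.2)) (μQ d) (μQ d) := by
  have h : MeasurePreserving (Prod.map (Prod.swap : Rd d × Rd d → Rd d × Rd d)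
      (id : Sph d → Sph d)) (μQ d) (μQ d) :=
    (Measure.measurePreserving_swap
      (μ := (volume : Measure (Rd d))) (ν := (volume : Measure (Rd d)))).prod
      (MeasurePreserving.id _)
  exact h

/-- omega-negation transform -/
lemma measurePreserving_rho :
    MeasurePreserving (fun q : (Rd d × Rd d) × Sph d => (q.1, -q.2)) (μQ d) (μQ d) := by
  have h : MeasurePreserving (Prod.map (id : Rd d × Rd d → Rd d × Rd d)
      (fun ω : Sph d => -ω)) (μQ d) (μQ d) :=
    (MeasurePreserving.id _).prod measurePreserving_negSph
  exact h

/-- collision transform -/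
lemma measurePreserving_tau :
    MeasurePreserving (fun q : (Rd d × Rd d) × Sph d =>
      ((vOut d q.1.1 q.1.2 q.2, vsOut d q.1.1 q.1.2 q.2), q.2)) (μQ d) (μQ d) := by
  have hunc : Measurable (Function.uncurry (fun (ω : Sph d) (p : Rd d × Rd d) =>
      (vOut d p.1 p.2 ω, vsOut d p.1 p.2 ω))) := by
    apply Continuous.measurable
    apply Continuous.prodMk
    · exact continuous_vOut.comp (by fun_prop : Continuous
        (fun x : Sph d × (Rd d × Rd d) => (x.2, x.1)))
    · exact continuous_vsOut.comp (by fun_prop : Continuous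
        (fun x : Sph d × (Rd d × Rd d) => (x.2, x.1)))
  have hskew : MeasurePreserving (fun x : Sph d × (Rd d × Rd d) =>
      (x.1, (vOut d x.2.1 x.2.2 x.1, vsOut d x.2.1 x.2.2 x.1)))
      ((sphMeasure d).prod (((volume : Measure (Rd d)).prod (volume : Measure (Rd d)))))
      ((sphMeasure d).prod (((volume : Measure (Rd d)).prod (volume : Measure (Rd d))))) :=
    (MeasurePreserving.id (sphMeasure d)).skew_product hunc
      (Filter.Eventually.of_forall fun ω => (measurePreserving_T ω).map_eq)
  have h := ((Measure.measurePreserving_swap (μ := (sphMeasure d))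
      (ν := ((volume : Measure (Rd d)).prod (volume : Measure (Rd d))))).comp hskew).comp
    (Measure.measurePreserving_swap
      (μ := ((volume : Measure (Rd d)).prod (volume : Measure (Rd d)))) (ν := (sphMeasure d)))
  exact h

end BoltzAux
end
noncomputable section
namespace BoltzAux
variable {d : ℕ}

def Mq (d : ℕ) (q : (Rd d × Rd d) × Sph d) : ℝ := Maxw d q.1.1 * Maxw d q.1.2

def Bp (d : ℕ) (q : (Rd d × Rd d) × Sph d) : ℝ := max ⟪q.1.1 - q.1.2, (q.2 : Rd d)⟫ 0

def sfun (d : ℕ) (q : (Rd d × Rd d) × Sph d) : ℝ := ‖q.1.1‖ + ‖q.1.2‖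

lemma sfun_nonneg (q : (Rd d × Rd d) × Sph d) : 0 ≤ sfun d q :=
  add_nonneg (norm_nonneg _) (norm_nonneg _)

lemma continuous_sfun : Continuous (sfun d) := by
  unfold sfun
  fun_prop

lemma continuous_Mq : Continuous (Mq d) := by
  unfold Mq
  exact ((maxw_continuous.comp (continuous_fst.comp continuous_fst))).mul
    ((maxw_continuous.comp (continuous_snd.comp continuous_fst)))

lemma continuous_Bp : Continuous (Bp d) := by
  unfold Bp
  have h1 : Continuous (fun q : (Rd d × Rd d) × Sph d => ((q.2 : Rd d))) :=
    continuous_subtype_val.comp continuous_snd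
  have h2 : Continuous (fun q : (Rd d × Rd d) × Sph d => q.1.1 - q.1.2) := by fun_prop
  exact (Continuous.inner h2 h1).max continuous_const

lemma continuous_collDiff {h : Rd d → ℝ} (hc : Continuous h) :
    Continuous (fun q : (Rd d × Rd d) × Sph d => collDiff d h q.1.1 q.1.2 q.2) := by
  unfold collDiff
  have := continuous_vOut (d := d)
  have := continuous_vsOut (d := d)
  fun_prop

lemma Mq_nonneg (q : (Rd d × Rd d) × Sph d) : 0 ≤ Mq d q :=
  mul_nonneg (maxw_nonneg _) (maxw_nonneg _)

lemma Bp_nonneg (q : (Rd d × Rd d) × Sph d) : 0 ≤ Bp d q := le_max_right _ _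

lemma Bp_le (q : (Rd d × Rd d) × Sph d) : Bp d q ≤ 1 + sfun d q := by
  have h1 : Bp d q ≤ ‖q.1.1 - q.1.2‖ := by
    refine max_le ?_ (norm_nonneg _)
    calc ⟪q.1.1 - q.1.2, (q.2 : Rd d)⟫ ≤ ‖q.1.1 - q.1.2‖ * ‖(q.2 : Rd d)‖ :=
          real_inner_le_norm _ _
      _ = ‖q.1.1 - q.1.2‖ := by rw [norm_omega, mul_one]
  calc Bp d q ≤ ‖q.1.1 - q.1.2‖ := h1
    _ ≤ ‖q.1.1‖ + ‖q.1.2‖ := norm_sub_le _ _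
    _ ≤ 1 + sfun d q := by rw [sfun]; linarith

/-- Gaussian is integrable. -/
lemma integrable_gauss4 : Integrable (fun v : Rd d => Real.exp (-(4⁻¹ : ℝ) * ‖v‖ ^ 2)) := by
  have h := GaussianFourier.integrable_cexp_neg_mul_sq_norm_add (V := Rd d) (b := ((4:ℝ)⁻¹ : ℂ))
      (by norm_num) 0 0
  have h2 := h.norm
  refine h2.congr ?_
  filter_upwards with v
  simp [Complex.norm_exp, ← Complex.ofReal_pow]

lemma maxw_poly_le (N : ℕ) (v : Rd d) :
    Maxw d v * (1 + ‖v‖) ^ N ≤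
      ((2 * π) ^ (-(d : ℝ) / 2) * Real.exp ((N : ℝ) ^ 2)) * Real.exp (-(4⁻¹ : ℝ) * ‖v‖ ^ 2) := by
  set t := ‖v‖ with ht
  have ht0 : 0 ≤ t := norm_nonneg v
  have h1 : (1 + t) ^ N ≤ Real.exp ((N : ℝ) * t) := by
    calc (1 + t) ^ N ≤ (Real.exp t) ^ N := by
          apply pow_le_pow_left₀ (by linarith)
          linarith [Real.add_one_le_exp t]
      _ = Real.exp ((N : ℝ) * t) := by
          rw [← Real.exp_nat_mul]
  have hK : (0:ℝ) < (2 * π) ^ (-(d : ℝ) / 2) := by positivity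
  rw [Maxw]
  calc (2 * π) ^ (-(d : ℝ) / 2) * Real.exp (-t ^ 2 / 2) * (1 + t) ^ N
      ≤ (2 * π) ^ (-(d : ℝ) / 2) * Real.exp (-t ^ 2 / 2) * Real.exp ((N : ℝ) * t) := by
        apply mul_le_mul_of_nonneg_left h1
        positivity
    _ = (2 * π) ^ (-(d : ℝ) / 2) * Real.exp (-t ^ 2 / 2 + (N : ℝ) * t) := by
        rw [mul_assoc, ← Real.exp_add]
    _ ≤ (2 * π) ^ (-(d : ℝ) / 2) * Real.exp ((N : ℝ) ^ 2 + -(4⁻¹ : ℝ) * t ^ 2) := by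
        apply mul_le_mul_of_nonneg_left _ (le_of_lt hK)
        apply Real.exp_le_exp.mpr
        nlinarith [sq_nonneg (t / 2 - (N : ℝ))]
    _ = ((2 * π) ^ (-(d : ℝ) / 2) * Real.exp ((N : ℝ) ^ 2)) * Real.exp (-(4⁻¹ : ℝ) * t ^ 2) := by
        rw [Real.exp_add]; ring

lemma integrable_maxw_poly (N : ℕ) :
    Integrable (fun v : Rd d => Maxw d v * (1 + ‖v‖) ^ N) := by
  refine Integrable.mono' (integrable_gauss4.const_mul
    ((2 * π) ^ (-(d : ℝ) / 2) * Real.exp ((N : ℝ) ^ 2))) ?_ ?_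
  · exact (maxw_continuous.mul (((continuous_const.add continuous_norm)).pow N)
      ).aestronglyMeasurable
  · filter_upwards with v
    rw [Real.norm_eq_abs, abs_of_nonneg (mul_nonneg (maxw_nonneg v) (by positivity))]
    · exact maxw_poly_le N v

/-- Master dominating function is integrable on the triple space. -/
lemma integrable_master (N : ℕ) :
    Integrable (fun q : (Rd d × Rd d) × Sph d => Mq d q * (1 + sfun d q) ^ N) (μQ d) := by
  have h2 : Integrable (fun p : Rd d × Rd d =>
      (Maxw d p.1 * (1 + ‖p.1‖) ^ N) * (Maxw d p.2 * (1 + ‖p.2‖) ^ N))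
      ((volume : Measure (Rd d)).prod volume) :=
    Integrable.mul_prod (integrable_maxw_poly N) (integrable_maxw_poly N)
  have h3 : Integrable (fun q : (Rd d × Rd d) × Sph d =>
      ((Maxw d q.1.1 * (1 + ‖q.1.1‖) ^ N) * (Maxw d q.1.2 * (1 + ‖q.1.2‖) ^ N)) * (1 : ℝ))
      (μQ d) := Integrable.mul_prod h2 (integrable_const 1)
  refine Integrable.mono' (by simpa using h3) ?_ ?_
  · exact (continuous_Mq.mul (((continuous_const.add
      continuous_sfun)).pow N)).aestronglyMeasurable
  · filter_upwards with q
    rw [Real.norm_eq_abs, abs_of_nonneg (mul_nonneg (Mq_nonneg q) (pow_nonneg (by linarith [sfun_nonneg (d := d) q]) N))]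
    have hs : (1 + sfun d q) ^ N ≤ (1 + ‖q.1.1‖) ^ N * (1 + ‖q.1.2‖) ^ N := by
      rw [← mul_pow]
      apply pow_le_pow_left₀ (by linarith [sfun_nonneg (d := d) q])
      have := norm_nonneg q.1.1
      have := norm_nonneg q.1.2
      rw [sfun]
      nlinarith
    calc Mq d q * (1 + sfun d q) ^ N
        ≤ Mq d q * ((1 + ‖q.1.1‖) ^ N * (1 + ‖q.1.2‖) ^ N) :=
          mul_le_mul_of_nonneg_left hs (Mq_nonneg q)
      _ = Maxw d q.1.1 * (1 + ‖q.1.1‖) ^ N * (Maxw d q.1.2 * (1 + ‖q.1.2‖) ^ N) := by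
          rw [Mq]; ring

/-- Omnibus integrability criterion. -/
lemma integrable_Mq_mul {φ : (Rd d × Rd d) × Sph d → ℝ}
    (hm : AEStronglyMeasurable (fun q => Mq d q * φ q) (μQ d)) {C : ℝ} (hC : 0 ≤ C) {N : ℕ}
    (hb : ∀ q, |φ q| ≤ C * (1 + sfun d q) ^ N) :
    Integrable (fun q => Mq d q * φ q) (μQ d) := by
  refine Integrable.mono' ((integrable_master N).const_mul C) hm ?_
  filter_upwards with q
  rw [Real.norm_eq_abs, abs_mul, abs_of_nonneg (Mq_nonneg q)]
  calc Mq d q * |φ q| ≤ Mq d q * (C * (1 + sfun d q) ^ N) :=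
        mul_le_mul_of_nonneg_left (hb q) (Mq_nonneg q)
    _ = C * (Mq d q * (1 + sfun d q) ^ N) := by ring

end BoltzAux
end
noncomputable section
namespace BoltzAux
variable {d : ℕ}

lemma abs_sum4 (x y z w : ℝ) : |x + y - z - w| ≤ |x| + |y| + |z| + |w| := by
  have hx1 := le_abs_self x; have hx2 := neg_abs_le x
  have hy1 := le_abs_self y; have hy2 := neg_abs_le y
  have hz1 := le_abs_self z; have hz2 := neg_abs_le z
  have hw1 := le_abs_self w; have hw2 := neg_abs_le w
  exact abs_le.mpr ⟨by linarith, by linarith⟩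

lemma collDiff_bound {h : Rd d → ℝ} {C : ℝ} (hC : 0 < C) {k : ℕ}
    (hb : ∀ v, |h v| ≤ C * (1 + ‖v‖) ^ k) (q : (Rd d × Rd d) × Sph d) :
    |collDiff d h q.1.1 q.1.2 q.2| ≤ (4 * C) * (1 + sfun d q) ^ k := by
  have hs0 := sfun_nonneg (d := d) q
  have key : ∀ x : Rd d, ‖x‖ ≤ sfun d q → |h x| ≤ C * (1 + sfun d q) ^ k := fun x hx =>
    le_trans (hb x) (mul_le_mul_of_nonneg_left
      (pow_le_pow_left₀ (by positivity) (by linarith) k) hC.le)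
  have h1 := key _ (norm_vOut_le q.1.1 q.1.2 q.2)
  have h2 := key _ (norm_vsOut_le q.1.1 q.1.2 q.2)
  have h3 := key q.1.1 (by rw [sfun]; linarith [norm_nonneg q.1.2])
  have h4 := key q.1.2 (by rw [sfun]; linarith [norm_nonneg q.1.1])
  rw [collDiff]
  calc |h (vOut d q.1.1 q.1.2 q.2) + h (vsOut d q.1.1 q.1.2 q.2) - h q.1.1 - h q.1.2|
      ≤ |h (vOut d q.1.1 q.1.2 q.2)| + |h (vsOut d q.1.1 q.1.2 q.2)| + |h q.1.1| + |h q.1.2| :=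
        abs_sum4 _ _ _ _
    _ ≤ (4 * C) * (1 + sfun d q) ^ k := by linarith

lemma point_bound {h : Rd d → ℝ} {C : ℝ} (hC : 0 < C) {k : ℕ}
    (hb : ∀ v, |h v| ≤ C * (1 + ‖v‖) ^ k) {q : (Rd d × Rd d) × Sph d} {x : Rd d}
    (hx : ‖x‖ ≤ sfun d q) : |h x| ≤ C * (1 + sfun d q) ^ k :=
  le_trans (hb x) (mul_le_mul_of_nonneg_left
    (pow_le_pow_left₀ (by positivity) (by linarith [sfun_nonneg (d := d) q]) k) hC.le)

/-- Omnibus integrability for `Mq * (Bp * (u * w))`. -/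
lemma integrable_BpUW {u w : (Rd d × Rd d) × Sph d → ℝ} (hu : Continuous u) (hw : Continuous w)
    {Cu Cw : ℝ} (hCu : 0 ≤ Cu) (hCw : 0 ≤ Cw) {ku kw : ℕ}
    (hub : ∀ q, |u q| ≤ Cu * (1 + sfun d q) ^ ku)
    (hwb : ∀ q, |w q| ≤ Cw * (1 + sfun d q) ^ kw) :
    Integrable (fun q => Mq d q * (Bp d q * (u q * w q))) (μQ d) := by
  refine integrable_Mq_mul ?_ (mul_nonneg hCu hCw) (N := ku + kw + 1) ?_
  · exact (continuous_Mq.mul (continuous_Bp.mul (hu.mul hw))).aestronglyMeasurable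
  · intro q
    have hs0 := sfun_nonneg (d := d) q
    have h1 : (0:ℝ) ≤ 1 + sfun d q := by linarith
    rw [abs_mul, abs_mul]
    calc |Bp d q| * (|u q| * |w q|)
        ≤ (1 + sfun d q) * ((Cu * (1 + sfun d q) ^ ku) * (Cw * (1 + sfun d q) ^ kw)) := by
          apply mul_le_mul
          · rw [abs_of_nonneg (Bp_nonneg q)]; exact Bp_le q
          · exact mul_le_mul (hub q) (hwb q) (abs_nonneg _) (by positivity)
          · positivity
          · positivity
      _ = Cu * Cw * (1 + sfun d q) ^ (ku + kw + 1) := by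
          rw [pow_add, pow_add, pow_one]; ring

/-- The main Dirichlet-form identity. -/
theorem main_identity (d : ℕ) (f g : Rd d → ℝ)
    (hfc : Continuous f) (hgc : Continuous g)
    (hfpoly : ∃ C > (0 : ℝ), ∃ k : ℕ, ∀ v, |f v| ≤ C * (1 + ‖v‖) ^ k)
    (hgpoly : ∃ C > (0 : ℝ), ∃ k : ℕ, ∀ v, |g v| ≤ C * (1 + ‖v‖) ^ k) :
    (∫ v, f v * linL d g v * Maxw d v) =
      (1 / 4) * ∫ q, Mq d q * (Bp d q *
        (collDiff d f q.1.1 q.1.2 q.2 * collDiff d g q.1.1 q.1.2 q.2)) ∂(μQ d) := by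
  obtain ⟨Cf, hCf, kf, hfb⟩ := hfpoly
  obtain ⟨Cg, hCg, kg, hgb⟩ := hgpoly
  -- abbreviations
  set Δg : (Rd d × Rd d) × Sph d → ℝ :=
    fun q => collDiff d g q.1.1 q.1.2 q.2 with hΔg
  set Δf : (Rd d × Rd d) × Sph d → ℝ :=
    fun q => collDiff d f q.1.1 q.1.2 q.2 with hΔf
  have hΔgc : Continuous Δg := continuous_collDiff hgc
  have hΔfc : Continuous Δf := continuous_collDiff hfc
  have hΔgb : ∀ q, |Δg q| ≤ (4 * Cg) * (1 + sfun d q) ^ kg := collDiff_bound hCg hgb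
  have hΔfb : ∀ q, |Δf q| ≤ (4 * Cf) * (1 + sfun d q) ^ kf := collDiff_bound hCf hfb
  -- the four integrands
  set H1 : (Rd d × Rd d) × Sph d → ℝ :=
    fun q => Mq d q * (Bp d q * (f q.1.1 * Δg q)) with hH1
  set H2 : (Rd d × Rd d) × Sph d → ℝ :=
    fun q => Mq d q * (Bp d q * (f q.1.2 * Δg q)) with hH2
  set H3 : (Rd d × Rd d) × Sph d → ℝ :=
    fun q => Mq d q * (Bp d q * (f (vOut d q.1.1 q.1.2 q.2) * Δg q)) with hH3
  set H4 : (Rd d × Rd d) × Sph d → ℝ :=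
    fun q => Mq d q * (Bp d q * (f (vsOut d q.1.1 q.1.2 q.2) * Δg q)) with hH4
  -- integrability of the four integrands
  have hf1b : ∀ q : (Rd d × Rd d) × Sph d, |f q.1.1| ≤ Cf * (1 + sfun d q) ^ kf := fun q =>
    point_bound hCf hfb (by rw [sfun]; linarith [norm_nonneg q.1.2])
  have hf2b : ∀ q : (Rd d × Rd d) × Sph d, |f q.1.2| ≤ Cf * (1 + sfun d q) ^ kf := fun q =>
    point_bound hCf hfb (by rw [sfun]; linarith [norm_nonneg q.1.1])
  have hf3b : ∀ q : (Rd d × Rd d) × Sph d, |f (vOut d q.1.1 q.1.2 q.2)|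
      ≤ Cf * (1 + sfun d q) ^ kf := fun q =>
    point_bound hCf hfb (norm_vOut_le q.1.1 q.1.2 q.2)
  have hf4b : ∀ q : (Rd d × Rd d) × Sph d, |f (vsOut d q.1.1 q.1.2 q.2)|
      ≤ Cf * (1 + sfun d q) ^ kf := fun q =>
    point_bound hCf hfb (norm_vsOut_le q.1.1 q.1.2 q.2)
  have hI1 : Integrable H1 (μQ d) :=
    integrable_BpUW (hfc.comp (continuous_fst.comp continuous_fst)) hΔgc hCf.le
      (by positivity) hf1b hΔgb
  have hI2 : Integrable H2 (μQ d) :=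
    integrable_BpUW (hfc.comp (continuous_snd.comp continuous_fst)) hΔgc hCf.le
      (by positivity) hf2b hΔgb
  have hI3 : Integrable H3 (μQ d) :=
    integrable_BpUW (hfc.comp continuous_vOut) hΔgc hCf.le (by positivity) hf3b hΔgb
  have hI4 : Integrable H4 (μQ d) :=
    integrable_BpUW (hfc.comp continuous_vsOut) hΔgc hCf.le (by positivity) hf4b hΔgb
  have hItar : Integrable (fun q => Mq d q * (Bp d q * (Δf q * Δg q))) (μQ d) :=
    integrable_BpUW hΔfc hΔgc (by positivity) (by positivity) hΔfb hΔgb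
  -- Step 1: Fubini
  have hFub : (∫ v, f v * linL d g v * Maxw d v) = ∫ q, -(H1 q) ∂(μQ d) := by
    have hpt : ∀ v : Rd d, f v * linL d g v * Maxw d v
        = ∫ p : Rd d × Sph d, (f v * Maxw d v) *
            (Maxw d p.1 * max ⟪v - p.1, (p.2 : Rd d)⟫ 0 * (-collDiff d g v p.1 p.2))
          ∂((volume : Measure (Rd d)).prod (sphMeasure d)) := by
      intro v
      rw [MeasureTheory.integral_const_mul, linL]
      ring
    rw [MeasureTheory.integral_congr_ae (Filter.Eventually.of_forall hpt)]
    have hGint : Integrable (fun z : Rd d × (Rd d × Sph d) => (f z.1 * Maxw d z.1) *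
        (Maxw d z.2.1 * max ⟪z.1 - z.2.1, (z.2.2 : Rd d)⟫ 0 * (-collDiff d g z.1 z.2.1 z.2.2)))
        ((volume : Measure (Rd d)).prod ((volume : Measure (Rd d)).prod (sphMeasure d))) := by
      rw [← (measurePreserving_prodAssoc (volume : Measure (Rd d)) (volume : Measure (Rd d))
        (sphMeasure d)).integrable_comp_emb (MeasurableEquiv.prodAssoc).measurableEmbedding]
      refine (hI1.neg).congr (Filter.Eventually.of_forall fun q => ?_)
      show -(H1 q) = _
      simp only [hH1, MeasurableEquiv.prodAssoc, MeasurableEquiv.coe_mk, Equiv.prodAssoc_apply,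
        Function.comp_apply, Mq, Bp, hΔg]
      ring
    rw [MeasureTheory.integral_integral hGint]
    rw [← (measurePreserving_prodAssoc (volume : Measure (Rd d)) (volume : Measure (Rd d))
      (sphMeasure d)).integral_comp (MeasurableEquiv.prodAssoc).measurableEmbedding _]
    refine MeasureTheory.integral_congr_ae (Filter.Eventually.of_forall fun q => ?_)
    show _ = -(H1 q)
    simp only [hH1, MeasurableEquiv.prodAssoc, MeasurableEquiv.coe_mk, Equiv.prodAssoc_apply,
      Mq, Bp, hΔg]
    ring
  -- Step 2: the three symmetries
  have hS2 : ∫ q, H1 q ∂(μQ d) = ∫ q, H2 q ∂(μQ d) := by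
    have hT : Function.Involutive
        (fun q : (Rd d × Rd d) × Sph d => ((q.1.2, q.1.1), -q.2)) := by
      intro q; simp
    have hmp : MeasurePreserving
        (fun q : (Rd d × Rd d) × Sph d => ((q.1.2, q.1.1), -q.2)) (μQ d) (μQ d) := by
      exact measurePreserving_sigma.comp measurePreserving_rho
    rw [← integral_comp_involutive hT hmp H1]
    refine MeasureTheory.integral_congr_ae (Filter.Eventually.of_forall fun q => ?_)
    show H1 (((q.1.2, q.1.1), -q.2)) = H2 q
    simp only [hH1, hH2, Mq, Bp, hΔg]
    have e1 : collDiff d g q.1.2 q.1.1 (-q.2) = collDiff d g q.1.1 q.1.2 q.2 := by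
      rw [collDiff_neg_omega, collDiff_swap]
    have e2 : max ⟪q.1.2 - q.1.1, ((-q.2 : Sph d) : Rd d)⟫ 0
        = max ⟪q.1.1 - q.1.2, (q.2 : Rd d)⟫ 0 := by
      have : ((-q.2 : Sph d) : Rd d) = -(q.2 : Rd d) := by simp
      rw [this, inner_neg_right, ← inner_neg_left]
      congr 2
      module
    rw [e1, e2]
    ring
  have hS3 : ∫ q, H1 q ∂(μQ d) = -∫ q, H3 q ∂(μQ d) := by
    have hT : Function.Involutive (fun q : (Rd d × Rd d) × Sph d =>
        ((vOut d q.1.1 q.1.2 (-q.2), vsOut d q.1.1 q.1.2 (-q.2)), -q.2)) := by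
      intro q
      show ((vOut d (vOut d q.1.1 q.1.2 (-q.2)) (vsOut d q.1.1 q.1.2 (-q.2)) (- -q.2),
        vsOut d (vOut d q.1.1 q.1.2 (-q.2)) (vsOut d q.1.1 q.1.2 (-q.2)) (- -q.2)), - -q.2) = q
      rw [neg_neg, vOut_neg, vsOut_neg, vOut_invol, vsOut_invol]
    have hmp : MeasurePreserving (fun q : (Rd d × Rd d) × Sph d =>
        ((vOut d q.1.1 q.1.2 (-q.2), vsOut d q.1.1 q.1.2 (-q.2)), -q.2)) (μQ d) (μQ d) :=
      measurePreserving_tau.comp measurePreserving_rho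
    rw [← integral_comp_involutive hT hmp H1, ← MeasureTheory.integral_neg]
    refine MeasureTheory.integral_congr_ae (Filter.Eventually.of_forall fun q => ?_)
    show H1 (((vOut d q.1.1 q.1.2 (-q.2), vsOut d q.1.1 q.1.2 (-q.2)), -q.2)) = -(H3 q)
    simp only [hH1, hH3, Mq, Bp, hΔg, vOut_neg, vsOut_neg]
    have e1 : collDiff d g (vOut d q.1.1 q.1.2 q.2) (vsOut d q.1.1 q.1.2 q.2) (-q.2)
        = -collDiff d g q.1.1 q.1.2 q.2 := by
      rw [collDiff_neg_omega, collDiff_out]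
    have e2 : max ⟪vOut d q.1.1 q.1.2 q.2 - vsOut d q.1.1 q.1.2 q.2,
        ((-q.2 : Sph d) : Rd d)⟫ 0 = max ⟪q.1.1 - q.1.2, (q.2 : Rd d)⟫ 0 := by
      have h : ((-q.2 : Sph d) : Rd d) = -(q.2 : Rd d) := by simp
      rw [h, inner_neg_right, inner_out, neg_neg]
    have e3 : Maxw d (vOut d q.1.1 q.1.2 q.2) * Maxw d (vsOut d q.1.1 q.1.2 q.2)
        = Maxw d q.1.1 * Maxw d q.1.2 := maxw_mul_out q.1.1 q.1.2 q.2
    rw [e1, e2, e3]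
    ring
  have hS4 : ∫ q, H1 q ∂(μQ d) = -∫ q, H4 q ∂(μQ d) := by
    have hT : Function.Involutive (fun q : (Rd d × Rd d) × Sph d =>
        ((vOut d q.1.2 q.1.1 q.2, vsOut d q.1.2 q.1.1 q.2), q.2)) := by
      intro q
      show ((vOut d (vsOut d q.1.2 q.1.1 q.2) (vOut d q.1.2 q.1.1 q.2) q.2,
        vsOut d (vsOut d q.1.2 q.1.1 q.2) (vOut d q.1.2 q.1.1 q.2) q.2), q.2) = q
      rw [vsOut_swap q.1.1 q.1.2 q.2, vOut_swap q.1.1 q.1.2 q.2, vOut_invol, vsOut_invol]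
    have hmp : MeasurePreserving (fun q : (Rd d × Rd d) × Sph d =>
        ((vOut d q.1.2 q.1.1 q.2, vsOut d q.1.2 q.1.1 q.2), q.2)) (μQ d) (μQ d) :=
      measurePreserving_tau.comp measurePreserving_sigma
    rw [← integral_comp_involutive hT hmp H1, ← MeasureTheory.integral_neg]
    refine MeasureTheory.integral_congr_ae (Filter.Eventually.of_forall fun q => ?_)
    show H1 (((vOut d q.1.2 q.1.1 q.2, vsOut d q.1.2 q.1.1 q.2), q.2)) = -(H4 q)
    simp only [hH1, hH4, Mq, Bp, hΔg]
    rw [vOut_swap q.1.1 q.1.2 q.2, vsOut_swap q.1.1 q.1.2 q.2]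
    have e1 : collDiff d g (vsOut d q.1.1 q.1.2 q.2) (vOut d q.1.1 q.1.2 q.2) q.2
        = -collDiff d g q.1.1 q.1.2 q.2 := by
      rw [collDiff_swap, collDiff_out]
    have e2 : max ⟪vsOut d q.1.1 q.1.2 q.2 - vOut d q.1.1 q.1.2 q.2, (q.2 : Rd d)⟫ 0
        = max ⟪q.1.1 - q.1.2, (q.2 : Rd d)⟫ 0 := by
      have h : vsOut d q.1.1 q.1.2 q.2 - vOut d q.1.1 q.1.2 q.2
          = -(vOut d q.1.1 q.1.2 q.2 - vsOut d q.1.1 q.1.2 q.2) := by module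
      rw [h, inner_neg_left, inner_out, neg_neg]
    have e3 : Maxw d (vsOut d q.1.1 q.1.2 q.2) * Maxw d (vOut d q.1.1 q.1.2 q.2)
        = Maxw d q.1.1 * Maxw d q.1.2 := by
      rw [mul_comm]; exact maxw_mul_out q.1.1 q.1.2 q.2
    rw [e1, e2, e3]
    ring
  -- Step 3: combine
  have hsplit : ∫ q, Mq d q * (Bp d q * (Δf q * Δg q)) ∂(μQ d)
      = (∫ q, H3 q ∂(μQ d)) + (∫ q, H4 q ∂(μQ d))
        - ((∫ q, H1 q ∂(μQ d)) + (∫ q, H2 q ∂(μQ d))) := by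
    have e1 := MeasureTheory.integral_sub (hI3.add hI4) (hI1.add hI2)
    have e2 := MeasureTheory.integral_add hI3 hI4
    have e3 := MeasureTheory.integral_add hI1 hI2
    simp only [Pi.add_apply] at e1 e2 e3
    calc ∫ q, Mq d q * (Bp d q * (Δf q * Δg q)) ∂(μQ d)
        = ∫ q, (H3 q + H4 q) - (H1 q + H2 q) ∂(μQ d) := by
          refine MeasureTheory.integral_congr_ae (Filter.Eventually.of_forall fun q => ?_)
          simp only [hH1, hH2, hH3, hH4, hΔf, hΔg, collDiff]
          ring
      _ = (∫ q, H3 q ∂(μQ d)) + (∫ q, H4 q ∂(μQ d))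
          - ((∫ q, H1 q ∂(μQ d)) + (∫ q, H2 q ∂(μQ d))) := by rw [e1, e2, e3]
  have hneg : ∫ q, -(H1 q) ∂(μQ d) = -∫ q, H1 q ∂(μQ d) := MeasureTheory.integral_neg _
  rw [hFub, hneg]
  rw [hsplit, ← hS2]
  have h3 := hS3
  have h4 := hS4
  linarith
end BoltzAux
end

noncomputable section

open BoltzAux

/-- Dirichlet form identity, symmetry and nonnegativity of `ℒ`: for
Lipschitz `f, g` of polynomial growth,
`∫ f ℒg M dv = (1/4) ∫∫∫ M M* ((v-v*)·ω)₊ Δf Δg dv dv* dω`,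
hence `∫ f ℒg M = ∫ g ℒf M` and `∫ g ℒg M ≥ 0`. -/
theorem linL_dirichlet_form (d : ℕ) (hd : 1 ≤ d)
    (f g : Rd d → ℝ) (Lf Lg : NNReal)
    (hf : LipschitzWith Lf f) (hg : LipschitzWith Lg g)
    (hfpoly : ∃ C > (0 : ℝ), ∃ k : ℕ, ∀ v, |f v| ≤ C * (1 + ‖v‖) ^ k)
    (hgpoly : ∃ C > (0 : ℝ), ∃ k : ℕ, ∀ v, |g v| ≤ C * (1 + ‖v‖) ^ k) :
    (∫ v, f v * linL d g v * Maxw d v) =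
      (1 / 4) * ∫ p : (Rd d × Rd d) × Sph d,
        Maxw d p.1.1 * Maxw d p.1.2 * max ⟪p.1.1 - p.1.2, (p.2 : Rd d)⟫ 0
          * collDiff d f p.1.1 p.1.2 p.2 * collDiff d g p.1.1 p.1.2 p.2
        ∂(((volume : Measure (Rd d)).prod (volume : Measure (Rd d))).prod
            (sphMeasure d)) ∧
    (∫ v, f v * linL d g v * Maxw d v) = (∫ v, g v * linL d f v * Maxw d v) ∧
    0 ≤ ∫ v, g v * linL d g v * Maxw d v := by
  have key : ∀ (f' g' : Rd d → ℝ), Continuous f' → Continuous g' →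
      (∃ C > (0 : ℝ), ∃ k : ℕ, ∀ v, |f' v| ≤ C * (1 + ‖v‖) ^ k) →
      (∃ C > (0 : ℝ), ∃ k : ℕ, ∀ v, |g' v| ≤ C * (1 + ‖v‖) ^ k) →
      (∫ v, f' v * linL d g' v * Maxw d v) =
        (1 / 4) * ∫ p : (Rd d × Rd d) × Sph d,
          Maxw d p.1.1 * Maxw d p.1.2 * max ⟪p.1.1 - p.1.2, (p.2 : Rd d)⟫ 0
            * collDiff d f' p.1.1 p.1.2 p.2 * collDiff d g' p.1.1 p.1.2 p.2
          ∂(((volume : Measure (Rd d)).prod (volume : Measure (Rd d))).prod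
              (sphMeasure d)) := by
    intro f' g' hf'c hg'c hf'p hg'p
    have h := main_identity d f' g' hf'c hg'c hf'p hg'p
    rw [h]
    congr 1
    refine MeasureTheory.integral_congr_ae (Filter.Eventually.of_forall fun q => ?_)
    simp only [Mq, Bp]
    ring
  have hfc := hf.continuous
  have hgc := hg.continuous
  refine ⟨key f g hfc hgc hfpoly hgpoly, ?_, ?_⟩
  · rw [key f g hfc hgc hfpoly hgpoly, key g f hgc hfc hgpoly hfpoly]
    congr 1
    refine MeasureTheory.integral_congr_ae (Filter.Eventually.of_forall fun q => ?_)
    ring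
  · rw [key g g hgc hgc hgpoly hgpoly]
    have hnn : 0 ≤ ∫ p : (Rd d × Rd d) × Sph d,
        Maxw d p.1.1 * Maxw d p.1.2 * max ⟪p.1.1 - p.1.2, (p.2 : Rd d)⟫ 0
          * collDiff d g p.1.1 p.1.2 p.2 * collDiff d g p.1.1 p.1.2 p.2
        ∂(((volume : Measure (Rd d)).prod (volume : Measure (Rd d))).prod
            (sphMeasure d)) := by
      refine MeasureTheory.integral_nonneg fun q => ?_
      have h1 : (0:ℝ) ≤ Maxw d q.1.1 * Maxw d q.1.2 * max ⟪q.1.1 - q.1.2, (q.2 : Rd d)⟫ 0 :=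
        mul_nonneg (mul_nonneg (maxw_nonneg _) (maxw_nonneg _)) (le_max_right _ _)
      calc (0:ℝ) ≤ (Maxw d q.1.1 * Maxw d q.1.2 * max ⟪q.1.1 - q.1.2, (q.2 : Rd d)⟫ 0)
            * (collDiff d g q.1.1 q.1.2 q.2 * collDiff d g q.1.1 q.1.2 q.2) :=
            mul_nonneg h1 (mul_self_nonneg _)
        _ = Maxw d q.1.1 * Maxw d q.1.2 * max ⟪q.1.1 - q.1.2, (q.2 : Rd d)⟫ 0
            * collDiff d g q.1.1 q.1.2 q.2 * collDiff d g q.1.1 q.1.2 q.2 := by ring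
    linarith

end
end
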